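/- arXiv:1804.03856 — 9 statements merged into one kernel-verified Lean document; each statement's English description precedes it below -/
import Mathlib

section
/- Let N ≥ 2 and ε > 0. If x : [0,∞) → ℝ^N is differentiable, takes values in the open chamber {x ∈ ℝ^N : x_1 > … > x_N}, satisfies x'(t) = H^A(x(t)) for all t ≥ 0, and x(0) ∈ U_ε, then x(t) ∈ U_ε for all t ≥ 0. -/
open Finset Set Metric Filter Topology

private lemma chain_aux {N : ℕ} (q : Fin N → ℝ) (c : ℝ)
    (hadj : ∀ n : ℕ, (h : n + 1 < N) → q ⟨n + 1, h⟩ + c ≤ q ⟨n, Nat.lt_of_succ_lt h⟩) :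
    ∀ (d n : ℕ) (h : n + d < N), q ⟨n + d, h⟩ + d * c ≤ q ⟨n, by omega⟩ := by
  intro d
  induction d with
  | zero => intro n h; simp
  | succ d ih =>
    intro n h
    have h1 : (n + d) + 1 < N := by omega
    have e1 := hadj (n + d) h1
    have e2 := ih n (by omega)
    have he : q ⟨n + (d + 1), h⟩ = q ⟨(n + d) + 1, h1⟩ := rfl
    rw [he]
    push_cast
    linarith

private lemma chain_nat {N : ℕ} (q : Fin N → ℝ) (c : ℝ)
    (hadj : ∀ n : ℕ, (h : n + 1 < N) → q ⟨n + 1, h⟩ + c ≤ q ⟨n, Nat.lt_of_succ_lt h⟩)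
    (n m : ℕ) (hm : m < N) (hnm : n < m) :
    q ⟨m, hm⟩ + ((m - n : ℕ) : ℝ) * c ≤ q ⟨n, by omega⟩ := by
  have h : n + (m - n) < N := by omega
  have h2 := chain_aux q c hadj (m - n) n h
  have he : (⟨n + (m - n), h⟩ : Fin N) = ⟨m, hm⟩ := by
    apply Fin.ext; simp; omega
  rwa [he] at h2

private lemma key_term {d : ℕ} (hd : 1 ≤ d) {c A : ℝ} (hc : 0 < c) (hA : (d : ℝ) * c ≤ A) :
    -(1 / (d : ℝ) - 1 / ((d : ℝ) + 1)) / c ≤ -(1 / A) + 1 / (A + c) := by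
  have hd' : (1 : ℝ) ≤ (d : ℝ) := by exact_mod_cast hd
  have hA0 : 0 < A := lt_of_lt_of_le (by nlinarith) hA
  have hAc : 0 < A + c := by linarith
  have hd0 : (d : ℝ) ≠ 0 := by positivity
  have key : c / (A * (A + c)) ≤ 1 / ((d : ℝ) * ((d : ℝ) + 1) * c) := by
    rw [div_le_div_iff₀ (by positivity) (by positivity)]
    nlinarith [mul_le_mul hA (by linarith : (d : ℝ) * c + c ≤ A + c) (by positivity) hA0.le]
  have e1 : -(1 / A) + 1 / (A + c) = -(c / (A * (A + c))) := by
    field_simp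
    ring
  have e2 : -(1 / (d : ℝ) - 1 / ((d : ℝ) + 1)) / c = -(1 / ((d : ℝ) * ((d : ℝ) + 1) * c)) := by
    field_simp
    ring
  rw [e1, e2]
  linarith

private lemma tel (M : ℕ) :
    ∑ j ∈ Finset.range M, (1 / ((j : ℝ) + 1) - 1 / ((j : ℝ) + 2)) = 1 - 1 / ((M : ℝ) + 1) := by
  induction M with
  | zero => simp
  | succ M ih =>
    rw [Finset.sum_range_succ, ih]
    have h1 : ((M : ℝ) + 1) ≠ 0 := by positivity
    have h2 : ((M : ℝ) + 2) ≠ 0 := by positivity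
    push_cast
    field_simp
    ring

private lemma keyB {N : ℕ} (y : Fin N → ℝ) (c : ℝ) (hc : 0 < c)
    (hadj : ∀ n : ℕ, (h : n + 1 < N) → y ⟨n + 1, h⟩ + c ≤ y ⟨n, Nat.lt_of_succ_lt h⟩)
    (k : ℕ) (hk : k + 1 < N)
    (heq : y ⟨k, Nat.lt_of_succ_lt hk⟩ - y ⟨k + 1, hk⟩ = c) :
    0 < (∑ j ∈ Finset.univ.erase ⟨k, Nat.lt_of_succ_lt hk⟩,
          1 / (y ⟨k, Nat.lt_of_succ_lt hk⟩ - y j))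
        - ∑ j ∈ Finset.univ.erase ⟨k + 1, hk⟩, 1 / (y ⟨k + 1, hk⟩ - y j) := by
  set K : Fin N := ⟨k, Nat.lt_of_succ_lt hk⟩ with hK
  set K1 : Fin N := ⟨k + 1, hk⟩ with hK1
  have hfull1 : ∑ j ∈ Finset.univ.erase K, 1 / (y K - y j)
      = ∑ j : Fin N, 1 / (y K - y j) :=
    Finset.sum_erase _ (by simp)
  have hfull2 : ∑ j ∈ Finset.univ.erase K1, 1 / (y K1 - y j)
      = ∑ j : Fin N, 1 / (y K1 - y j) :=
    Finset.sum_erase _ (by simp)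
  rw [hfull1, hfull2, ← Finset.sum_sub_distrib]
  -- lower bound function
  set ψ : ℕ → ℝ := fun n =>
    if n = k ∨ n = k + 1 then 1 / c
    else if n < k then -(1 / ((k - n : ℕ) : ℝ) - 1 / (((k - n : ℕ) : ℝ) + 1)) / c
    else -(1 / ((n - k - 1 : ℕ) : ℝ) - 1 / (((n - k - 1 : ℕ) : ℝ) + 1)) / c with hψ
  have hyKK1 : y K1 - y K = -c := by linarith
  have hbound : ∀ j : Fin N, ψ (j : ℕ) ≤ 1 / (y K - y j) - 1 / (y K1 - y j) := by
    intro j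
    rcases lt_trichotomy (j : ℕ) k with hjk | hjk | hjk
    · -- j < k
      have hd : 1 ≤ k - (j : ℕ) := by omega
      have hA := chain_nat y c hadj (j : ℕ) k (Nat.lt_of_succ_lt hk) hjk
      have hB := chain_nat y c hadj (j : ℕ) (k + 1) hk (by omega)
      have hj : (⟨(j : ℕ), by omega⟩ : Fin N) = j := by apply Fin.ext; rfl
      rw [hj] at hA hB
      set A : ℝ := y j - y K with hA'
      have hA2 : ((k - (j : ℕ) : ℕ) : ℝ) * c ≤ A := by
        rw [hA']; rw [hK] at *; linarith
      have hAB : y K1 - y j = -(A + c) := by rw [hA']; linarith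
      have hKA : y K - y j = -A := by rw [hA']; ring
      have hψj : ψ (j : ℕ) = -(1 / ((k - (j : ℕ) : ℕ) : ℝ)
          - 1 / (((k - (j : ℕ) : ℕ) : ℝ) + 1)) / c := by
        rw [hψ]; simp only []
        rw [if_neg (by omega), if_pos hjk]
      rw [hψj, hKA, hAB]
      have : 1 / (-A) - 1 / (-(A + c)) = -(1 / A) + 1 / (A + c) := by
        rw [one_div_neg_eq_neg_one_div, one_div_neg_eq_neg_one_div]; ring
      rw [this]
      exact key_term hd hc hA2
    · -- j = k
      have hj : j = K := Fin.ext hjk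
      rw [hj]
      have hψj : ψ (K : ℕ) = 1 / c := by show ψ k = 1 / c; simp [hψ]
      rw [hψj, sub_self, div_zero, hyKK1, one_div_neg_eq_neg_one_div]
      linarith
    · -- j > k
      rcases Nat.lt_or_ge (k + 1) (j : ℕ) with hjk1 | hjk1
      · -- j > k + 1
        have hd : 1 ≤ (j : ℕ) - k - 1 := by omega
        have hA := chain_nat y c hadj (k + 1) (j : ℕ) j.isLt hjk1
        have hj : (⟨(j : ℕ), j.isLt⟩ : Fin N) = j := by apply Fin.ext; rfl
        rw [hj] at hA
        set A : ℝ := y K1 - y j with hA'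
        have hcast : (((j : ℕ) - (k + 1) : ℕ) : ℝ) = (((j : ℕ) - k - 1 : ℕ) : ℝ) := by
          congr 1
        have hA2 : (((j : ℕ) - k - 1 : ℕ) : ℝ) * c ≤ A := by
          rw [hA', hK1] at *; rw [← hcast]; linarith
        have hKA : y K - y j = A + c := by rw [hA']; linarith
        have hψj : ψ (j : ℕ) = -(1 / (((j : ℕ) - k - 1 : ℕ) : ℝ)
            - 1 / ((((j : ℕ) - k - 1 : ℕ) : ℝ) + 1)) / c := by
          rw [hψ]; simp only []
          rw [if_neg (by omega), if_neg (by omega)]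
        rw [hψj, hKA]
        have : 1 / (A + c) - 1 / A = -(1 / A) + 1 / (A + c) := by ring
        rw [this]
        exact key_term hd hc hA2
      · -- j = k + 1
        have hj : j = K1 := Fin.ext (by omega : (j : ℕ) = k + 1)
        rw [hj]
        have hψj : ψ (K1 : ℕ) = 1 / c := by show ψ (k + 1) = 1 / c; simp [hψ]
        rw [hψj, sub_self, div_zero, heq, sub_zero]
  have hsum : ∑ j : Fin N, ψ (j : ℕ) ≤ ∑ j : Fin N, (1 / (y K - y j) - 1 / (y K1 - y j)) :=
    Finset.sum_le_sum fun j _ => hbound j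
  have hpos : 0 < ∑ j : Fin N, ψ (j : ℕ) := by
    have hrange : ∑ j : Fin N, ψ (j : ℕ) = ∑ n ∈ Finset.range N, ψ n :=
      Fin.sum_univ_eq_sum_range ψ N
    rw [hrange]
    have hsplit : ∑ n ∈ Finset.range N, ψ n
        = (∑ n ∈ Finset.Ico 0 k, ψ n) + (∑ n ∈ Finset.Ico k (k + 2), ψ n)
          + ∑ n ∈ Finset.Ico (k + 2) N, ψ n := by
      rw [Finset.range_eq_Ico,
        ← Finset.sum_Ico_consecutive ψ (by omega : 0 ≤ k + 2) (by omega : k + 2 ≤ N),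
        ← Finset.sum_Ico_consecutive ψ (by omega : 0 ≤ k) (by omega : k ≤ k + 2)]
    -- the generic summand
    set f : ℕ → ℝ := fun j => -(1 / ((j : ℝ) + 1) - 1 / ((j : ℝ) + 2)) / c with hf
    have hfsum : ∀ M : ℕ, ∑ j ∈ Finset.range M, f j = -(1 - 1 / ((M : ℝ) + 1)) / c := by
      intro M
      rw [hf]
      simp only []
      rw [← Finset.sum_div, Finset.sum_neg_distrib, tel M]
    have hleft : ∑ n ∈ Finset.Ico 0 k, ψ n = -(1 - 1 / ((k : ℝ) + 1)) / c := by
      rw [← Finset.range_eq_Ico, ← hfsum k, ← Finset.sum_range_reflect f k]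
      apply Finset.sum_congr rfl
      intro n hn
      have hn' : n < k := Finset.mem_range.mp hn
      have hψn : ψ n = -(1 / ((k - n : ℕ) : ℝ) - 1 / (((k - n : ℕ) : ℝ) + 1)) / c := by
        rw [hψ]; simp only []; rw [if_neg (by omega), if_pos hn']
      have hc1 : ((k - 1 - n : ℕ) : ℝ) + 1 = ((k - n : ℕ) : ℝ) := by
        have : (k - 1 - n) + 1 = k - n := by omega
        rw [← this]; push_cast; ring
      have hc2 : ((k - 1 - n : ℕ) : ℝ) + 2 = ((k - n : ℕ) : ℝ) + 1 := by
        rw [← hc1]; ring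
      rw [hψn, hf]
      simp only []
      rw [hc1, hc2]
    have hmid : ∑ n ∈ Finset.Ico k (k + 2), ψ n = 2 / c := by
      rw [Finset.sum_Ico_eq_sum_range]
      have h2 : k + 2 - k = 2 := by omega
      rw [h2]
      rw [Finset.sum_range_succ, Finset.sum_range_succ, Finset.sum_range_zero]
      have e1 : ψ (k + 0) = 1 / c := by rw [hψ]; simp only []; rw [if_pos (Or.inl (by omega))]
      have e2 : ψ (k + 1) = 1 / c := by simp [hψ]
      rw [e1, e2]
      ring
    have hright : ∑ n ∈ Finset.Ico (k + 2) N, ψ n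
        = -(1 - 1 / (((N - k - 2 : ℕ) : ℝ) + 1)) / c := by
      rw [Finset.sum_Ico_eq_sum_range]
      have h2 : N - (k + 2) = N - k - 2 := by omega
      rw [h2, ← hfsum (N - k - 2)]
      apply Finset.sum_congr rfl
      intro n hn
      have hψn : ψ (k + 2 + n) = -(1 / ((k + 2 + n - k - 1 : ℕ) : ℝ)
          - 1 / (((k + 2 + n - k - 1 : ℕ) : ℝ) + 1)) / c := by
        rw [hψ]; simp only []; rw [if_neg (by omega), if_neg (by omega)]
      have hcc : ((k + 2 + n - k - 1 : ℕ) : ℝ) = (n : ℝ) + 1 := by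
        have : k + 2 + n - k - 1 = n + 1 := by omega
        rw [this]; push_cast; ring
      rw [hψn, hf]
      simp only []
      rw [hcc]
      ring_nf
    rw [hsplit, hleft, hmid, hright]
    have p1 : 0 < 1 / ((k : ℝ) + 1) := by positivity
    have p2 : 0 < 1 / (((N - k - 2 : ℕ) : ℝ) + 1) := by positivity
    have e : -(1 - 1 / ((k : ℝ) + 1)) / c + 2 / c + -(1 - 1 / (((N - k - 2 : ℕ) : ℝ) + 1)) / c
        = (1 / ((k : ℝ) + 1) + 1 / (((N - k - 2 : ℕ) : ℝ) + 1)) / c := by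
      field_simp
      ring
    rw [e]
    positivity
  linarith

private lemma chain_fin {N : ℕ} (q : Fin N → ℝ) (c : ℝ)
    (hadj : ∀ n : ℕ, (h : n + 1 < N) → q ⟨n + 1, h⟩ + c ≤ q ⟨n, Nat.lt_of_succ_lt h⟩)
    (i j : Fin N) (hij : i < j) :
    q j + (((j : ℕ) - (i : ℕ) : ℕ) : ℝ) * c ≤ q i := by
  have h2 := chain_nat q c hadj (i : ℕ) (j : ℕ) j.isLt (Fin.lt_def.mp hij)
  exact h2

set_option maxHeartbeats 1000000 in
/-- For `N ≥ 2` and `ε > 0`: a differentiable solution of the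
dynamical system `x' = H^A(x)` taking values in the open Weyl chamber of type `A`
which starts in `U_ε = {x ∈ C_N^A : dist(x, ∂C_N^A) > ε}` stays in `U_ε` for all `t ≥ 0`. -/
theorem flow_HA_preserves_Ueps (N : ℕ) (hN : 2 ≤ N) (ε : ℝ) (hε : 0 < ε)
    (C U : Set (EuclideanSpace ℝ (Fin N)))
    (hC : C = {x | ∀ i j : Fin N, i < j → x j ≤ x i})
    (hU : U = {x ∈ C | ε < Metric.infDist x (frontier C)})
    (H : EuclideanSpace ℝ (Fin N) → EuclideanSpace ℝ (Fin N))
    (hH : ∀ x, ∀ i : Fin N, H x i = ∑ j ∈ Finset.univ.erase i, 1 / (x i - x j))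
    (x : ℝ → EuclideanSpace ℝ (Fin N))
    (hchamber : ∀ t ≥ (0:ℝ), ∀ i j : Fin N, i < j → x t j < x t i)
    (hode : ∀ t ≥ (0:ℝ), HasDerivWithinAt x (H (x t)) (Set.Ici 0) t)
    (hx0 : x 0 ∈ U) :
    ∀ t ≥ (0:ℝ), x t ∈ U := by
  have hsqrt2 : (0:ℝ) < Real.sqrt 2 := Real.sqrt_pos.mpr (by norm_num)
  set c : ℝ := Real.sqrt 2 * ε with hcdef
  have hc0 : 0 < c := mul_pos hsqrt2 hε
  have hc2 : c ^ 2 = 2 * ε ^ 2 := by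
    rw [hcdef, mul_pow, Real.sq_sqrt (by norm_num : (0:ℝ) ≤ 2)]
  -- coordinate continuity
  have hcoordCont : ∀ i : Fin N, Continuous fun y : EuclideanSpace ℝ (Fin N) => y i :=
    fun i => (EuclideanSpace.proj (𝕜 := ℝ) i).continuous
  -- C is closed
  have hCclosed : IsClosed C := by
    rw [hC]
    have he : {z : EuclideanSpace ℝ (Fin N) | ∀ i j : Fin N, i < j → z j ≤ z i}
        = ⋂ (i : Fin N), ⋂ (j : Fin N), {z : EuclideanSpace ℝ (Fin N) | i < j → z j ≤ z i} := by
      ext z; simp [Set.mem_iInter, Set.mem_setOf_eq]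
    rw [he]
    refine isClosed_iInter fun i => isClosed_iInter fun j => ?_
    by_cases hij : i < j
    · simp only [hij, true_implies]
      exact isClosed_le (hcoordCont j) (hcoordCont i)
    · have : {z : EuclideanSpace ℝ (Fin N) | i < j → z j ≤ z i} = Set.univ := by
        ext z; simp [hij]
      rw [this]; exact isClosed_univ
  have hfr : frontier C = C \ interior C := hCclosed.frontier_eq
  -- the open chamber is contained in the interior of C
  have hOopen : IsOpen {z : EuclideanSpace ℝ (Fin N) | ∀ i j : Fin N, i < j → z j < z i} := by
    have he : {z : EuclideanSpace ℝ (Fin N) | ∀ i j : Fin N, i < j → z j < z i}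
        = ⋂ (i : Fin N), ⋂ (j : Fin N), {z : EuclideanSpace ℝ (Fin N) | i < j → z j < z i} := by
      ext z; simp [Set.mem_iInter, Set.mem_setOf_eq]
    rw [he]
    refine isOpen_iInter_of_finite fun i => isOpen_iInter_of_finite fun j => ?_
    by_cases hij : i < j
    · simp only [hij, true_implies]
      exact isOpen_lt (hcoordCont j) (hcoordCont i)
    · have : {z : EuclideanSpace ℝ (Fin N) | i < j → z j < z i} = Set.univ := by
        ext z; simp [hij]
      rw [this]; exact isOpen_univ
  have hOsub : {z : EuclideanSpace ℝ (Fin N) | ∀ i j : Fin N, i < j → z j < z i}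
      ⊆ interior C := by
    apply interior_maximal ?_ hOopen
    rw [hC]; intro z hz i j hij; exact (hz i j hij).le
  -- a point with two equal adjacent coordinates is not in the interior of C
  have hnotint : ∀ (p : EuclideanSpace ℝ (Fin N)) (n : ℕ) (h : n + 1 < N),
      p ⟨n + 1, h⟩ = p ⟨n, Nat.lt_of_succ_lt h⟩ → p ∉ interior C := by
    intro p n h hpe hint
    set K : Fin N := ⟨n, Nat.lt_of_succ_lt h⟩ with hKdef
    set K1 : Fin N := ⟨n + 1, h⟩ with hK1def
    have hKne : K ≠ K1 := Fin.ne_of_val_ne (show n ≠ n + 1 by omega)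
    rw [mem_interior_iff_mem_nhds, Metric.mem_nhds_iff] at hint
    obtain ⟨δ, hδ, hball⟩ := hint
    set q : EuclideanSpace ℝ (Fin N) := WithLp.toLp 2 (Function.update p K (p K - δ / 2)) with hq
    have hqK : q K = p K - δ / 2 := Function.update_self _ _ _
    have hqK1 : q K1 = p K1 := Function.update_of_ne hKne.symm _ _
    have hdistq : dist q p = δ / 2 := by
      rw [EuclideanSpace.dist_eq]
      have hterm : ∀ i : Fin N, dist (q i) (p i) ^ 2 = if i = K then (δ / 2) ^ 2 else 0 := by
        intro i
        by_cases hi : i = K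
        · subst hi
          rw [if_pos rfl, hqK, Real.dist_eq]
          have : p K - δ / 2 - p K = -(δ / 2) := by ring
          rw [this, abs_neg, abs_of_nonneg (by linarith)]
        · rw [if_neg hi]
          have : q i = p i := Function.update_of_ne hi _ _
          rw [this, dist_self]
          norm_num
      rw [Finset.sum_congr rfl fun i _ => hterm i, Finset.sum_ite_eq' Finset.univ K]
      simp only [Finset.mem_univ, if_true]
      rw [Real.sqrt_sq (by linarith)]
    have hqball : q ∈ Metric.ball p δ := by
      rw [Metric.mem_ball, hdistq]; linarith
    have hqC : q ∈ C := hball hqball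
    rw [hC] at hqC
    have := hqC K K1 (Fin.mk_lt_mk.mpr (by omega))
    rw [hqK, hqK1, hpe] at this
    linarith
  -- frontier is nonempty
  have hfrne : (frontier C).Nonempty := by
    refine ⟨WithLp.toLp 2 (fun _ => (0 : ℝ)), ?_⟩
    rw [hfr]
    constructor
    · rw [hC]; intro i j _; exact le_refl _
    · exact hnotint _ 0 (by omega) rfl
  -- initial data
  have hx0C : x 0 ∈ C := by rw [hU] at hx0; exact hx0.1
  have hx0d : ε < Metric.infDist (x 0) (frontier C) := by rw [hU] at hx0; exact hx0.2
  -- Step 0 : all adjacent gaps at time 0 exceed c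
  have step0 : ∀ (n : ℕ) (h : n + 1 < N),
      c < x 0 ⟨n, Nat.lt_of_succ_lt h⟩ - x 0 ⟨n + 1, h⟩ := by
    intro n h
    set K : Fin N := ⟨n, Nat.lt_of_succ_lt h⟩ with hKdef
    set K1 : Fin N := ⟨n + 1, h⟩ with hK1def
    have hKK1 : K < K1 := Fin.mk_lt_mk.mpr (by omega)
    have hKne : K ≠ K1 := ne_of_lt hKK1
    set g : ℝ := x 0 K - x 0 K1 with hg
    have hgpos : 0 < g := sub_pos.mpr (hchamber 0 le_rfl K K1 hKK1)
    set a : ℝ := (x 0 K + x 0 K1) / 2 with ha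
    set p : EuclideanSpace ℝ (Fin N) :=
      WithLp.toLp 2 (Function.update (Function.update (x 0) K a) K1 a) with hp
    have hpK : p K = a := by
      rw [hp, WithLp.ofLp_toLp, Function.update_of_ne hKne, Function.update_self]
    have hpK1 : p K1 = a := Function.update_self _ _ _
    have hpother : ∀ i : Fin N, i ≠ K → i ≠ K1 → p i = x 0 i := by
      intro i h1 h2
      rw [hp, WithLp.ofLp_toLp, Function.update_of_ne h2, Function.update_of_ne h1]
    -- p ∈ C
    have hpC : p ∈ C := by
      have hadj0 : ∀ m : ℕ, (hm : m + 1 < N) →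
          p ⟨m + 1, hm⟩ + 0 ≤ p ⟨m, Nat.lt_of_succ_lt hm⟩ := by
        intro m hm
        set M : Fin N := ⟨m, Nat.lt_of_succ_lt hm⟩ with hMdef
        set M1 : Fin N := ⟨m + 1, hm⟩ with hM1def
        have hMM1 : M < M1 := Fin.mk_lt_mk.mpr (by omega)
        rw [add_zero]
        rcases lt_trichotomy (m + 1) n with h1 | h1 | h1
        · have e1 : p M = x 0 M := hpother M (Fin.ne_of_val_ne (show m ≠ n by omega))
            (Fin.ne_of_val_ne (show m ≠ n + 1 by omega))
          have e2 : p M1 = x 0 M1 := hpother M1 (Fin.ne_of_val_ne (show m + 1 ≠ n by omega))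
            (Fin.ne_of_val_ne (show m + 1 ≠ n + 1 by omega))
          rw [e1, e2]
          exact (hchamber 0 le_rfl M M1 hMM1).le
        · -- m + 1 = n : M1 = K
          have e2 : M1 = K := Fin.ext (show m + 1 = n from h1)
          have e1 : p M = x 0 M := hpother M (Fin.ne_of_val_ne (show m ≠ n by omega))
            (Fin.ne_of_val_ne (show m ≠ n + 1 by omega))
          rw [e2, hpK, e1]
          have h3 : x 0 K < x 0 M := hchamber 0 le_rfl M K (Fin.mk_lt_mk.mpr (by omega))
          have h4 : x 0 K1 < x 0 K := hchamber 0 le_rfl K K1 hKK1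
          rw [ha]; linarith
        · rcases lt_trichotomy m n with h2 | h2 | h2
          · omega
          · -- m = n : M = K, M1 = K1
            have e1 : M = K := Fin.ext (show m = n from h2)
            have e2 : M1 = K1 := Fin.ext (show m + 1 = n + 1 by omega)
            rw [e1, e2, hpK, hpK1]
          · rcases Nat.lt_or_ge (n + 1) m with h3 | h3
            · -- m > n + 1 : both beyond
              have e1 : p M = x 0 M := hpother M (Fin.ne_of_val_ne (show m ≠ n by omega))
                (Fin.ne_of_val_ne (show m ≠ n + 1 by omega))
              have e2 : p M1 = x 0 M1 := hpother M1
                (Fin.ne_of_val_ne (show m + 1 ≠ n by omega))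
                (Fin.ne_of_val_ne (show m + 1 ≠ n + 1 by omega))
              rw [e1, e2]
              exact (hchamber 0 le_rfl M M1 hMM1).le
            · -- m = n + 1 : M = K1
              have e1 : M = K1 := Fin.ext (show m = n + 1 by omega)
              have e2 : p M1 = x 0 M1 := hpother M1
                (Fin.ne_of_val_ne (show m + 1 ≠ n by omega))
                (Fin.ne_of_val_ne (show m + 1 ≠ n + 1 by omega))
              rw [e1, hpK1, e2]
              have h4 : x 0 M1 ≤ x 0 K1 := by
                rcases eq_or_lt_of_le (show n + 1 ≤ m + 1 by omega) with h5 | h5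
                · have he5 : K1 = M1 := Fin.ext (show n + 1 = m + 1 from h5)
                  rw [he5]
                · exact (hchamber 0 le_rfl K1 M1 (Fin.lt_def.mpr h5)).le
              have h5 : x 0 K1 < x 0 K := hchamber 0 le_rfl K K1 hKK1
              rw [ha]; linarith
      rw [hC]
      intro i j hij
      have := chain_fin p 0 hadj0 i j hij
      simpa using this
    -- p is on the frontier
    have hpfront : p ∈ frontier C := by
      rw [hfr]
      exact ⟨hpC, hnotint p n h (hpK1.trans hpK.symm)⟩
    -- distance from x 0 to p
    have hdistp : dist (x 0) p = Real.sqrt (g ^ 2 / 2) := by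
      rw [EuclideanSpace.dist_eq]
      congr 1
      have hterm : ∀ i : Fin N, dist (x 0 i) (p i) ^ 2
          = (if i = K then (g / 2) ^ 2 else 0) + (if i = K1 then (g / 2) ^ 2 else 0) := by
        intro i
        by_cases h1 : i = K
        · subst h1
          rw [if_pos rfl, if_neg hKne, hpK, Real.dist_eq]
          have e : x 0 K - a = g / 2 := by rw [ha, hg]; ring
          rw [e, abs_of_nonneg (by linarith), add_zero]
        · by_cases h2 : i = K1
          · subst h2
            rw [if_neg h1, if_pos rfl, hpK1, Real.dist_eq]
            have e : x 0 K1 - a = -(g / 2) := by rw [ha, hg]; ring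
            rw [e, abs_neg, abs_of_nonneg (by linarith), zero_add]
          · rw [if_neg h1, if_neg h2, hpother i h1 h2, dist_self]
            norm_num
      rw [Finset.sum_congr rfl fun i _ => hterm i, Finset.sum_add_distrib,
        Finset.sum_ite_eq' Finset.univ K, Finset.sum_ite_eq' Finset.univ K1]
      simp only [Finset.mem_univ, if_true]
      ring
    have h1 : ε < Real.sqrt (g ^ 2 / 2) := by
      rw [← hdistp]
      exact lt_of_lt_of_le hx0d (Metric.infDist_le_dist_of_mem hpfront)
    have h2 : ε ^ 2 < g ^ 2 / 2 := (Real.lt_sqrt hε.le).mp h1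
    have h3 : c ^ 2 < g ^ 2 := by nlinarith [h2, hc2]
    exact lt_of_pow_lt_pow_left₀ 2 hgpos.le h3
  -- gap function with junk value
  set G : Fin N → ℝ → ℝ := fun i t =>
    if h : (i : ℕ) + 1 < N then x t i - x t ⟨(i : ℕ) + 1, h⟩ else c + 1 with hGdef
  have hxCont : ContinuousOn x (Set.Ici 0) := fun t ht => (hode t ht).continuousWithinAt
  have hcoordOn : ∀ i : Fin N, ContinuousOn (fun t => x t i) (Set.Ici 0) :=
    fun i => (hcoordCont i).comp_continuousOn hxCont
  have hGcont : ∀ i : Fin N, ContinuousOn (G i) (Set.Ici 0) := by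
    intro i
    rw [hGdef]
    by_cases hh : (i : ℕ) + 1 < N
    · simp only [dif_pos hh]
      exact (hcoordOn i).sub (hcoordOn _)
    · simp only [dif_neg hh]
      exact continuousOn_const
  have hGval : ∀ (n : ℕ) (h : n + 1 < N) (t : ℝ),
      G ⟨n, Nat.lt_of_succ_lt h⟩ t = x t ⟨n, Nat.lt_of_succ_lt h⟩ - x t ⟨n + 1, h⟩ := by
    intro n h t
    rw [hGdef]
    exact dif_pos h
  -- main claim : all gaps stay above c
  have main : ∀ t : ℝ, 0 ≤ t → ∀ i : Fin N, c < G i t := by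
    by_contra hcon
    push_neg at hcon
    obtain ⟨t1, ht1, i1, hi1⟩ := hcon
    set S : Set ℝ := Set.Ici 0 ∩ (⋃ i : Fin N, {t | G i t ≤ c}) with hS
    have hSclosed : IsClosed S := by
      rw [hS, Set.inter_iUnion]
      apply isClosed_iUnion_of_finite
      intro i
      exact (hGcont i).preimage_isClosed_of_isClosed isClosed_Ici isClosed_Iic
    have hSne : S.Nonempty := ⟨t1, ht1, Set.mem_iUnion.mpr ⟨i1, hi1⟩⟩
    have hSbdd : BddBelow S := ⟨0, fun s hs => hs.1⟩
    set t0 := sInf S with ht0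
    have ht0S : t0 ∈ S := hSclosed.csInf_mem hSne hSbdd
    have ht0nn : 0 ≤ t0 := ht0S.1
    have hlt : ∀ s, 0 ≤ s → s < t0 → ∀ i : Fin N, c < G i s := by
      intro s hs hst i
      by_contra hle
      push_neg at hle
      have hsS : s ∈ S := ⟨hs, Set.mem_iUnion.mpr ⟨i, hle⟩⟩
      exact absurd (csInf_le hSbdd hsS) (not_le.mpr hst)
    obtain ⟨iS, hiS0⟩ := Set.mem_iUnion.mp ht0S.2
    have hiS : G iS t0 ≤ c := hiS0
    have hiS1 : (iS : ℕ) + 1 < N := by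
      by_contra hno
      have : G iS t0 = c + 1 := by rw [hGdef]; exact dif_neg hno
      rw [this] at hiS
      linarith
    have ht0pos : 0 < t0 := by
      rcases eq_or_lt_of_le ht0nn with h0 | h0
      · exfalso
        have hKi : iS = ⟨(iS : ℕ), Nat.lt_of_succ_lt hiS1⟩ := Fin.ext rfl
        have := step0 (iS : ℕ) hiS1
        rw [← hGval (iS : ℕ) hiS1 0] at this
        rw [← hKi] at this
        rw [← h0] at hiS
        linarith
      · exact h0
    have hNB : (𝓝[Set.Ico 0 t0] t0).NeBot := by
      apply mem_closure_iff_nhdsWithin_neBot.mp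
      rw [closure_Ico (ne_of_lt ht0pos)]
      exact ⟨ht0nn, le_rfl⟩
    have hgap0 : ∀ i : Fin N, c ≤ G i t0 := by
      intro i
      have hc1 : ContinuousWithinAt (G i) (Set.Ici 0) t0 := (hGcont i) t0 (Set.mem_Ici.mpr ht0nn)
      have htt : Filter.Tendsto (G i) (𝓝[Set.Ico 0 t0] t0) (𝓝 (G i t0)) :=
        hc1.mono_left (nhdsWithin_mono _ Set.Ico_subset_Ici_self)
      exact ge_of_tendsto htt (Filter.eventually_of_mem self_mem_nhdsWithin
        fun s hs => (hlt s hs.1 hs.2 i).le)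
    -- notation for the critical pair
    set k : ℕ := (iS : ℕ) with hkdef
    have hkk : k + 1 < N := hiS1
    set K : Fin N := ⟨k, Nat.lt_of_succ_lt hkk⟩ with hKdef
    set K1 : Fin N := ⟨k + 1, hkk⟩ with hK1def
    have hKiS : K = iS := Fin.ext rfl
    have hGK : ∀ t : ℝ, G K t = x t K - x t K1 := fun t => hGval k hkk t
    have heqc : x t0 K - x t0 K1 = c := by
      have h1 : G K t0 ≤ c := by rw [hKiS]; exact hiS
      have h2 : c ≤ G K t0 := hgap0 K
      have := le_antisymm h1 h2
      rwa [hGK t0] at this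
    -- adjacent gaps at time t0 are at least c
    have hadjt0 : ∀ n : ℕ, (h : n + 1 < N) →
        x t0 ⟨n + 1, h⟩ + c ≤ x t0 ⟨n, Nat.lt_of_succ_lt h⟩ := by
      intro n h
      have := hgap0 ⟨n, Nat.lt_of_succ_lt h⟩
      rw [hGval n h t0] at this
      linarith
    -- derivative of the critical gap
    have hderK : HasDerivWithinAt (fun s => x s K - x s K1)
        (H (x t0) K - H (x t0) K1) (Set.Ici 0) t0 := by
      have h1 : HasDerivWithinAt (fun s => x s K) (H (x t0) K) (Set.Ici 0) t0 := by
        have := (EuclideanSpace.proj (𝕜 := ℝ) K).hasFDerivAt.comp_hasDerivWithinAt t0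
          (hode t0 ht0nn)
        exact this
      have h2 : HasDerivWithinAt (fun s => x s K1) (H (x t0) K1) (Set.Ici 0) t0 := by
        have := (EuclideanSpace.proj (𝕜 := ℝ) K1).hasFDerivAt.comp_hasDerivWithinAt t0
          (hode t0 ht0nn)
        exact this
      exact h1.sub h2
    -- the derivative is nonpositive (left minimum)
    have hDle : H (x t0) K - H (x t0) K1 ≤ 0 := by
      have hslope := hasDerivWithinAt_iff_tendsto_slope.mp hderK
      have hsub : Set.Ico 0 t0 ⊆ Set.Ici 0 \ {t0} := fun s hs => ⟨hs.1, ne_of_lt hs.2⟩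
      have hslope' : Filter.Tendsto (slope (fun s => x s K - x s K1) t0)
          (𝓝[Set.Ico 0 t0] t0) (𝓝 (H (x t0) K - H (x t0) K1)) :=
        hslope.mono_left (nhdsWithin_mono _ hsub)
      apply le_of_tendsto hslope'
      apply Filter.eventually_of_mem self_mem_nhdsWithin
      intro s hs
      rw [slope_def_field]
      apply div_nonpos_of_nonneg_of_nonpos
      · have h1 := hlt s hs.1 hs.2 K
        rw [hGK s] at h1
        linarith
      · linarith [hs.2]
    -- the derivative is positive (key estimate)
    have hDpos : 0 < H (x t0) K - H (x t0) K1 := by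
      rw [hH (x t0) K, hH (x t0) K1]
      exact keyB (x t0) c hc0 hadjt0 k hkk heqc
    linarith
  -- conclusion
  intro t ht
  rw [hU]
  have hxtC : x t ∈ C := by
    rw [hC]; intro i j hij; exact (hchamber t ht i j hij).le
  refine ⟨hxtC, ?_⟩
  haveI : Nonempty (Fin N) := ⟨⟨0, by omega⟩⟩
  set g0 : ℝ := Finset.univ.inf' Finset.univ_nonempty (fun i : Fin N => G i t) with hg0
  have hg0c : c < g0 := by
    rw [hg0, Finset.lt_inf'_iff]
    exact fun i _ => main t ht i
  have hg0le : ∀ i : Fin N, g0 ≤ G i t := fun i => Finset.inf'_le _ (Finset.mem_univ i)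
  have hg0pos : 0 < g0 := lt_trans hc0 hg0c
  by_contra hcon
  push_neg at hcon
  have hlt2 : Metric.infDist (x t) (frontier C) < Real.sqrt (g0 ^ 2 / 2) := by
    apply lt_of_le_of_lt hcon
    rw [Real.lt_sqrt hε.le]
    have h3 : c ^ 2 < g0 ^ 2 := by nlinarith [hg0c, hc0]
    nlinarith [hc2, h3]
  obtain ⟨y, hyF, hyd⟩ := (Metric.infDist_lt_iff hfrne).mp hlt2
  have hyC : y ∈ C := by rw [hfr] at hyF; exact hyF.1
  have hynotO : ¬ (∀ i j : Fin N, i < j → y j < y i) := by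
    intro hstrict
    rw [hfr] at hyF
    exact hyF.2 (hOsub hstrict)
  push_neg at hynotO
  obtain ⟨i, j, hij, hyij⟩ := hynotO
  have hijv : (i : ℕ) < (j : ℕ) := Fin.lt_def.mp hij
  have hn1 : (i : ℕ) + 1 < N := by have := j.isLt; omega
  set K : Fin N := ⟨(i : ℕ), Nat.lt_of_succ_lt hn1⟩ with hKdef
  set K1 : Fin N := ⟨(i : ℕ) + 1, hn1⟩ with hK1def
  have hKi : K = i := Fin.ext rfl
  have hKne : K ≠ K1 := Fin.ne_of_val_ne (show (i : ℕ) ≠ (i : ℕ) + 1 by omega)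
  have hyCC : ∀ i' j' : Fin N, i' < j' → y j' ≤ y i' := by rw [hC] at hyC; exact hyC
  have hyK1K : y K1 ≤ y K := hyCC K K1 (Fin.mk_lt_mk.mpr (by omega))
  have hyKK1 : y K ≤ y K1 := by
    rcases eq_or_lt_of_le (show (i : ℕ) + 1 ≤ (j : ℕ) by omega) with h5 | h5
    · have he5 : K1 = j := Fin.ext (show (i : ℕ) + 1 = (j : ℕ) from h5)
      rw [he5, hKi]
      exact hyij
    · have h6 : y j ≤ y K1 := hyCC K1 j (Fin.lt_def.mpr h5)
      rw [hKi]
      linarith [hyij]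
  have he : y K = y K1 := le_antisymm hyKK1 hyK1K
  -- lower bound on the distance
  have hdistlow : Real.sqrt (g0 ^ 2 / 2) ≤ dist (x t) y := by
    rw [EuclideanSpace.dist_eq]
    apply Real.sqrt_le_sqrt
    have hsub2 : ∑ i0 ∈ ({K, K1} : Finset (Fin N)), dist (x t i0) (y i0) ^ 2
        ≤ ∑ i0 : Fin N, dist (x t i0) (y i0) ^ 2 :=
      Finset.sum_le_sum_of_subset_of_nonneg (Finset.subset_univ _)
        (fun i0 _ _ => sq_nonneg _)
    rw [Finset.sum_pair hKne] at hsub2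
    have hGKt : g0 ≤ x t K - x t K1 := by
      have h7 := hg0le K
      rwa [hGval (i : ℕ) hn1 t] at h7
    have e1 : dist (x t K) (y K) ^ 2 = (x t K - y K) ^ 2 := by rw [Real.dist_eq, sq_abs]
    have e2 : dist (x t K1) (y K1) ^ 2 = (x t K1 - y K1) ^ 2 := by rw [Real.dist_eq, sq_abs]
    rw [e1, e2] at hsub2
    have h2 : g0 ^ 2 ≤ (x t K - x t K1) ^ 2 := by nlinarith [hGKt, hg0pos]
    have key : g0 ^ 2 / 2 ≤ (x t K - y K) ^ 2 + (x t K1 - y K1) ^ 2 := by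
      rw [← he]
      nlinarith [sq_nonneg (x t K + x t K1 - 2 * y K), h2]
    linarith [hsub2, key]
  linarith [hyd, hdistlow]
end

section
/- Let N ≥ 2 and let x : [0,T] → ℝ^N (T > 0, or [0,∞)) be differentiable, take values in the open chamber {x ∈ ℝ^N : x_1 > … > x_N}, and satisfy x'(t) = H^A(x(t)) for all t. Then the minimal gap function t ↦ min_{1 ≤ i ≤ N−1} (x_i(t) − x_{i+1}(t)) is nondecreasing in t. -/
open Set Filter

lemma tele_sum (n : ℕ) : ∑ k ∈ Finset.range n, (1/((k:ℝ)+1) - 1/((k:ℝ)+2)) = 1 - 1/(n+1) := by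
  induction n with
  | zero => simp
  | succ n ih =>
    rw [Finset.sum_range_succ, ih]
    have h1 : (n:ℝ)+1 ≠ 0 := by positivity
    have h2 : (n:ℝ)+2 ≠ 0 := by positivity
    push_cast
    field_simp
    ring

lemma chain_lower {N : ℕ} (a : Fin N → ℝ) (g : ℝ)
    (hg : ∀ k : ℕ, ∀ h : k + 1 < N, g ≤ a ⟨k, by omega⟩ - a ⟨k+1, h⟩) :
    ∀ i j : ℕ, ∀ hi : i < N, ∀ hj : j < N, j ≤ i → ((i:ℝ) - j) * g ≤ a ⟨j, hj⟩ - a ⟨i, hi⟩ := by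
  intro i
  induction i with
  | zero => intro j hi hj hji; interval_cases j; simp
  | succ i ih =>
    intro j hi hj hji
    rcases Nat.eq_or_lt_of_le hji with h | h
    · subst h; simp
    · have hji' : j ≤ i := by omega
      have h1 := ih j (by omega) hj hji'
      have h2 := hg i hi
      push_cast
      calc ((i:ℝ) + 1 - j) * g = ((i:ℝ) - j) * g + g := by ring
        _ ≤ (a ⟨j, hj⟩ - a ⟨i, by omega⟩) + (a ⟨i, by omega⟩ - a ⟨i+1, hi⟩) := add_le_add h1 h2
        _ = a ⟨j, hj⟩ - a ⟨i+1, hi⟩ := by ring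

lemma term_bound {g P Q D : ℝ} (hg : 0 < g) (hD : 1 ≤ D) (hP : D*g ≤ P) (hQ : (D+1)*g ≤ Q) :
    -(1/(D*(D+1)*g)) ≤ -(g/(P*Q)) := by
  have hP0 : 0 < P := lt_of_lt_of_le (by positivity) hP
  have hQ0 : 0 < Q := lt_of_lt_of_le (by positivity) hQ
  have hD0 : 0 < D := by linarith
  have key : g/(P*Q) ≤ 1/(D*(D+1)*g) := by
    rw [div_le_div_iff₀ (by positivity) (by positivity)]
    nlinarith [mul_le_mul hP hQ (by positivity) (le_of_lt hP0)]
  linarith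

lemma inv_sub_inv_eq {u v g : ℝ} (hu : u ≠ 0) (hv : v ≠ 0) (h : u - v = g) :
    1/u - 1/v = -(g/(u*v)) := by
  have e : 1/u - 1/v = (v - u)/(u*v) := by rw [div_sub_div _ _ hu hv, one_mul, mul_one]
  rw [e]
  have : v - u = -g := by linarith
  rw [this, neg_div]

lemma bfrac (u g : ℝ) (hu : u ≠ 0) (hu1 : u + 1 ≠ 0) (hg : g ≠ 0) :
    (1/u - 1/(u+1))/g = 1/(u*(u+1)*g) := by
  field_simp
  try tauto
  try ring

lemma key_pos {N : ℕ} (a : Fin N → ℝ) (g : ℝ) (hgpos : 0 < g)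
    (hg : ∀ k : ℕ, ∀ h : k + 1 < N, g ≤ a ⟨k, by omega⟩ - a ⟨k+1, h⟩)
    (i : ℕ) (hi : i + 1 < N) (hgi : a ⟨i, by omega⟩ - a ⟨i+1, hi⟩ = g) :
    0 < (∑ j ∈ Finset.univ.erase ⟨i, by omega⟩, 1 / (a ⟨i, by omega⟩ - a j))
      - ∑ j ∈ Finset.univ.erase ⟨i+1, hi⟩, 1 / (a ⟨i+1, hi⟩ - a j) := by
  have hiN : i < N := by omega
  set I : Fin N := ⟨i, by omega⟩ with hI
  set I1 : Fin N := ⟨i+1, hi⟩ with hI1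
  set F : Fin N → ℝ := fun j => 1 / (a I - a j) with hF
  set G : Fin N → ℝ := fun j => 1 / (a I1 - a j) with hG
  have hne : I1 ≠ I := by simp [hI, hI1, Fin.ext_iff]
  have hmem1 : I1 ∈ Finset.univ.erase I := by simp [hne]
  have hmem2 : I ∈ Finset.univ.erase I1 := by simp [hne.symm]
  set S : Finset (Fin N) := (Finset.univ.erase I).erase I1 with hS
  have e1 : ∑ j ∈ Finset.univ.erase I, F j = F I1 + ∑ j ∈ S, F j :=
    (Finset.add_sum_erase _ F hmem1).symm
  have e2 : ∑ j ∈ Finset.univ.erase I1, G j = G I + ∑ j ∈ S, G j := by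
    rw [hS, Finset.erase_right_comm]
    exact (Finset.add_sum_erase _ G hmem2).symm
  -- the b function
  set b : ℕ → ℝ := fun k =>
    if k < i then (1/((i:ℝ)-k) - 1/((i:ℝ)+1-k))/g
    else if i+1 < k then (1/((k:ℝ)-i-1) - 1/((k:ℝ)-i))/g else 0 with hb
  have hbi : b i = 0 := by simp [hb]
  have hbi1 : b (i+1) = 0 := by simp [hb]
  -- pointwise bound
  have hpt : ∀ j ∈ S, -(b j.val) ≤ F j - G j := by
    intro j hj
    have hj1 : j ≠ I1 := Finset.ne_of_mem_erase hj
    have hj2 : j ≠ I := Finset.ne_of_mem_erase (Finset.mem_of_mem_erase hj)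
    have hjv1 : j.val ≠ i + 1 := fun h => hj1 (Fin.ext h)
    have hjv2 : j.val ≠ i := fun h => hj2 (Fin.ext h)
    have hcase : j.val < i ∨ i + 1 < j.val := by omega
    have hjeq : (⟨j.val, j.isLt⟩ : Fin N) = j := Fin.eta j j.isLt
    rcases hcase with hc | hc
    · -- j < i
      have hji : (j.val:ℝ) + 1 ≤ i := by exact_mod_cast hc
      set D : ℝ := (i:ℝ) - j.val with hD
      have hD1 : 1 ≤ D := by rw [hD]; linarith
      have hP : D * g ≤ a j - a I := by
        have h := chain_lower a g hg i j.val hiN j.isLt (le_of_lt hc)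
        rw [hjeq] at h; exact h
      have hQ : (D+1) * g ≤ a j - a I1 := by
        have h := chain_lower a g hg (i+1) j.val hi j.isLt (by omega)
        rw [hjeq] at h
        push_cast at h
        calc (D+1)*g = ((i:ℝ)+1-(j.val:ℝ))*g := by rw [hD]; ring
          _ ≤ _ := h
      have hP0 : 0 < a j - a I := lt_of_lt_of_le (mul_pos (by linarith) hgpos) hP
      have hQ0 : 0 < a j - a I1 := lt_of_lt_of_le (mul_pos (by linarith) hgpos) hQ
      have h1 : a I - a j ≠ 0 := by intro h; rw [sub_eq_zero] at h; rw [h] at hP0; linarith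
      have h2 : a I1 - a j ≠ 0 := by intro h; rw [sub_eq_zero] at h; rw [h] at hQ0; linarith
      have hterm : F j - G j = -(g/((a I - a j) * (a I1 - a j))) := by
        rw [hF, hG]
        exact inv_sub_inv_eq h1 h2 (by linarith [hgi])
      have hprod : (a I - a j) * (a I1 - a j) = (a j - a I) * (a j - a I1) := by ring
      have hbeq : b j.val = 1/(D*(D+1)*g) := by
        have z1 : (i:ℝ) - (j.val:ℝ) ≠ 0 := by linarith
        have z2 : ((i:ℝ) - (j.val:ℝ)) + 1 ≠ 0 := by linarith
        have zg : g ≠ 0 := ne_of_gt hgpos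
        calc b j.val = (1/((i:ℝ)-(j.val:ℝ)) - 1/(((i:ℝ)-(j.val:ℝ))+1))/g := by
              rw [hb]; simp only [hc, if_pos]; ring_nf
          _ = 1/(((i:ℝ)-(j.val:ℝ))*(((i:ℝ)-(j.val:ℝ))+1)*g) := bfrac _ _ z1 z2 zg
          _ = 1/(D*(D+1)*g) := by rw [hD]
      rw [hterm, hbeq, hprod]
      exact term_bound hgpos hD1 hP hQ
    · -- j > i+1
      have hji : (i:ℝ) + 2 ≤ (j.val:ℝ) := by exact_mod_cast hc
      set D : ℝ := (j.val:ℝ) - i - 1 with hD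
      have hD1 : 1 ≤ D := by rw [hD]; linarith
      have hQ : D * g ≤ a I1 - a j := by
        have := chain_lower a g hg j.val (i+1) j.isLt hi (by omega)
        rw [hjeq] at this
        have h2 : ((j.val:ℝ) - (i+1)) * g ≤ a I1 - a j := by push_cast at this ⊢; linarith [this]
        calc D * g = ((j.val:ℝ) - (i+1)) * g := by rw [hD]; ring_nf
          _ ≤ _ := h2
      have hP : (D+1) * g ≤ a I - a j := by
        have := chain_lower a g hg j.val i j.isLt hiN (by omega)
        rw [hjeq] at this
        calc (D+1) * g = ((j.val:ℝ) - i) * g := by rw [hD]; ring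
          _ ≤ _ := this
      have hP0 : 0 < a I - a j := lt_of_lt_of_le (mul_pos (by linarith) hgpos) hP
      have hQ0 : 0 < a I1 - a j := lt_of_lt_of_le (mul_pos (by linarith) hgpos) hQ
      have h1 : a I - a j ≠ 0 := ne_of_gt hP0
      have h2 : a I1 - a j ≠ 0 := ne_of_gt hQ0
      have hterm : F j - G j = -(g/((a I - a j) * (a I1 - a j))) := by
        rw [hF, hG]
        exact inv_sub_inv_eq h1 h2 (by linarith [hgi])
      have hprod : (a I - a j) * (a I1 - a j) = (a I1 - a j) * (a I - a j) := by ring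
      have hbeq : b j.val = 1/(D*(D+1)*g) := by
        have z1 : (j.val:ℝ) - (i:ℝ) - 1 ≠ 0 := by linarith
        have z2 : ((j.val:ℝ) - (i:ℝ) - 1) + 1 ≠ 0 := by linarith
        have zg : g ≠ 0 := ne_of_gt hgpos
        calc b j.val = (1/((j.val:ℝ)-(i:ℝ)-1) - 1/(((j.val:ℝ)-(i:ℝ)-1)+1))/g := by
              rw [hb]; simp only [if_neg (by omega : ¬ j.val < i), if_pos hc]; ring_nf
          _ = 1/(((j.val:ℝ)-(i:ℝ)-1)*(((j.val:ℝ)-(i:ℝ)-1)+1)*g) := bfrac _ _ z1 z2 zg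
          _ = 1/(D*(D+1)*g) := by rw [hD]
      rw [hterm, hbeq, hprod]
      exact term_bound hgpos hD1 hQ hP
  -- sum of b over S
  have hsumS : ∑ j ∈ S, b j.val = ∑ k ∈ Finset.range N, b k := by
    rw [hS, Finset.sum_erase _ (by simpa using hbi1), Finset.sum_erase _ (by simpa using hbi)]
    exact Fin.sum_univ_eq_sum_range b N
  have hsplit : ∑ k ∈ Finset.range N, b k
      = (1 - 1/((i:ℝ)+1))/g + (1 - 1/((N:ℝ)-i-1))/g := by
    rw [Finset.range_eq_Ico, ← Finset.sum_Ico_consecutive b (Nat.zero_le i) (by omega : i ≤ N),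
      ← Finset.sum_Ico_consecutive b (by omega : i ≤ i+2) (by omega : i+2 ≤ N)]
    have hmid : ∑ k ∈ Finset.Ico i (i+2), b k = 0 := by
      rw [Finset.sum_Ico_eq_sum_range]
      simp [Finset.sum_range_succ, hbi, hbi1]
    have hleft : ∑ k ∈ Finset.Ico 0 i, b k = (1 - 1/((i:ℝ)+1))/g := by
      rw [← Finset.range_eq_Ico]
      have : ∀ k ∈ Finset.range i, b k = (1/((i:ℝ)-k) - 1/((i:ℝ)+1-k))/g := by
        intro k hk
        rw [hb]; simp only [Finset.mem_range] at hk; simp [hk]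
      rw [Finset.sum_congr rfl this, ← Finset.sum_div]
      congr 1
      have hrefl := Finset.sum_range_reflect (fun k => 1/((k:ℝ)+1) - 1/((k:ℝ)+2)) i
      rw [← tele_sum i, ← hrefl]
      apply Finset.sum_congr rfl
      intro k hk
      simp only [Finset.mem_range] at hk
      have h1 : ((i - 1 - k : ℕ):ℝ) = (i:ℝ) - 1 - k := by
        rw [Nat.sub_sub, Nat.cast_sub (by omega : 1 + k ≤ i)]
        push_cast; ring
      rw [h1]; ring_nf
    have hright : ∑ k ∈ Finset.Ico (i+2) N, b k = (1 - 1/((N:ℝ)-i-1))/g := by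
      rw [Finset.sum_Ico_eq_sum_range]
      have : ∀ k ∈ Finset.range (N - (i+2)), b (i+2+k) = (1/((k:ℝ)+1) - 1/((k:ℝ)+2))/g := by
        intro k hk
        rw [hb]
        simp only [if_neg (by omega : ¬ i+2+k < i), if_pos (by omega : i+1 < i+2+k)]
        push_cast
        ring_nf
      rw [Finset.sum_congr rfl this, ← Finset.sum_div, tele_sum]
      have hcast : ((N - (i+2) : ℕ):ℝ) = (N:ℝ) - i - 2 := by
        rw [Nat.cast_sub (by omega : i+2 ≤ N)]; push_cast; ring
      rw [hcast]
      ring_nf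
    rw [hleft, hmid, hright]; ring
  -- combine
  have hsum_ge : -((1 - 1/((i:ℝ)+1))/g + (1 - 1/((N:ℝ)-i-1))/g) ≤ ∑ j ∈ S, (F j - G j) := by
    rw [← hsplit, ← hsumS, ← Finset.sum_neg_distrib]
    exact Finset.sum_le_sum hpt
  have hFI1 : F I1 = 1/g := by rw [hF]; simp only; rw [hgi]
  have hGI : G I = -(1/g) := by
    rw [hG]; simp only
    have : a I1 - a I = -g := by linarith [hgi]
    rw [this]
    rw [one_div, one_div, inv_neg]
  have hi1pos : (0:ℝ) < 1/((i:ℝ)+1) := by positivity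
  have hNi : (0:ℝ) < 1/((N:ℝ)-i-1) := by
    have h2 : (i:ℝ) + 2 ≤ N := by exact_mod_cast hi
    have : (1:ℝ) ≤ (N:ℝ)-i-1 := by linarith
    positivity
  rw [e1, e2, hFI1, hGI]
  have hdiff : ∑ j ∈ S, (F j - G j) = (∑ j ∈ S, F j) - ∑ j ∈ S, G j :=
    Finset.sum_sub_distrib F G
  have heq : (2:ℝ)/g - ((1 - 1/((i:ℝ)+1))/g + (1 - 1/((N:ℝ)-i-1))/g)
      = (1/((i:ℝ)+1) + 1/((N:ℝ)-i-1))/g := by ring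
  have hpos : (0:ℝ) < (1/((i:ℝ)+1) + 1/((N:ℝ)-i-1))/g :=
    div_pos (by linarith) hgpos
  have hg2 : (1:ℝ)/g + 1/g = 2/g := by ring
  linarith [hsum_ge, hdiff, heq, hpos]

/-- For `N ≥ 2` and a differentiable solution `x : [0,T] → ℝ^N` of
`x' = H^A(x)` with values in the open Weyl chamber of type `A`, the minimal gap
`t ↦ min_{1 ≤ i ≤ N−1} (x_i(t) − x_{i+1}(t))` is nondecreasing on `[0,T]`. -/
theorem minGap_monotone_HA (N : ℕ) (hN : 2 ≤ N) (T : ℝ) (hT : 0 < T)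
    (H : EuclideanSpace ℝ (Fin N) → EuclideanSpace ℝ (Fin N))
    (hH : ∀ x, ∀ i : Fin N, H x i = ∑ j ∈ Finset.univ.erase i, 1 / (x i - x j))
    (x : ℝ → EuclideanSpace ℝ (Fin N))
    (hchamber : ∀ t ∈ Set.Icc (0:ℝ) T, ∀ i j : Fin N, i < j → x t j < x t i)
    (hode : ∀ t ∈ Set.Icc (0:ℝ) T, HasDerivWithinAt x (H (x t)) (Set.Icc 0 T) t) :
    MonotoneOn
      (fun t => ⨅ i : Fin (N - 1),
        (x t ⟨i.val, by have := i.isLt; omega⟩ - x t ⟨i.val + 1, by have := i.isLt; omega⟩))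
      (Set.Icc (0:ℝ) T) := by
  classical
  have hN1 : 0 < N - 1 := by omega
  haveI : Nonempty (Fin (N-1)) := ⟨⟨0, hN1⟩⟩
  have hlt1 : ∀ i : Fin (N-1), i.val < N := fun i => by have := i.isLt; omega
  have hlt2 : ∀ i : Fin (N-1), i.val + 1 < N := fun i => by have := i.isLt; omega
  set gp : Fin (N-1) → ℝ → ℝ := fun i t => x t ⟨i.val, hlt1 i⟩ - x t ⟨i.val+1, hlt2 i⟩ with hgp
  set m : ℝ → ℝ := fun t => ⨅ i, gp i t with hm
  suffices hmain : MonotoneOn m (Set.Icc (0:ℝ) T) by exact hmain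
  have hbdd : ∀ t, BddBelow (Set.range (fun i => gp i t)) :=
    fun t => (Set.finite_range _).bddBelow
  have hmle : ∀ t, ∀ i : Fin (N-1), m t ≤ gp i t := fun t i => ciInf_le (hbdd t) i
  have hattain : ∀ t, ∃ i, m t = gp i t := by
    intro t
    obtain ⟨i, hi⟩ := Finite.exists_min (fun i => gp i t)
    exact ⟨i, le_antisymm (hmle t i) (le_ciInf hi)⟩
  -- derivative of each gap
  set d : Fin (N-1) → ℝ → ℝ :=
    fun i t => H (x t) ⟨i.val, hlt1 i⟩ - H (x t) ⟨i.val+1, hlt2 i⟩ with hd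
  have hderiv : ∀ i : Fin (N-1), ∀ t ∈ Set.Icc (0:ℝ) T,
      HasDerivWithinAt (gp i) (d i t) (Set.Icc 0 T) t := by
    intro i t ht
    have h1 := (EuclideanSpace.proj (𝕜 := ℝ)
      (⟨i.val, hlt1 i⟩ : Fin N)).hasFDerivAt.comp_hasDerivWithinAt t (hode t ht)
    have h2 := (EuclideanSpace.proj (𝕜 := ℝ)
      (⟨i.val+1, hlt2 i⟩ : Fin N)).hasFDerivAt.comp_hasDerivWithinAt t (hode t ht)
    exact (h1.sub h2)
  -- continuity of m
  have hcont : ContinuousOn m (Set.Icc (0:ℝ) T) := by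
    have hfun : m = fun a => Finset.univ.inf' Finset.univ_nonempty (fun i => gp i a) := by
      funext a
      obtain ⟨i, hi⟩ := hattain a
      apply le_antisymm
      · obtain ⟨j, _, hj⟩ := Finset.exists_mem_eq_inf' Finset.univ_nonempty (fun i => gp i a)
        rw [hj]; exact hmle a j
      · rw [hi]; exact Finset.inf'_le _ (Finset.mem_univ i)
    rw [hfun]
    intro t ht
    exact Filter.Tendsto.finset_inf'_nhds_apply Finset.univ_nonempty
      (fun i _ => (hderiv i t ht).continuousWithinAt)
  -- positivity of gaps and of m
  have hgap_pos : ∀ t ∈ Set.Icc (0:ℝ) T, ∀ i : Fin (N-1), 0 < gp i t := by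
    intro t ht i
    have := hchamber t ht ⟨i.val, hlt1 i⟩ ⟨i.val+1, hlt2 i⟩ (by simp [Fin.mk_lt_mk])
    simpa [hgp] using sub_pos.mpr this
  have hmpos : ∀ t ∈ Set.Icc (0:ℝ) T, 0 < m t := by
    intro t ht; obtain ⟨i, hi⟩ := hattain t; rw [hi]; exact hgap_pos t ht i
  -- positivity of the derivative at active indices
  have hdpos : ∀ t ∈ Set.Icc (0:ℝ) T, ∀ i : Fin (N-1), gp i t = m t → 0 < d i t := by
    intro t ht i hit
    have hmt := hmpos t ht
    have hg : ∀ k : ℕ, ∀ h : k + 1 < N, m t ≤ x t ⟨k, by omega⟩ - x t ⟨k+1, h⟩ := by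
      intro k hk
      have hk1 : k < N - 1 := by omega
      have := hmle t ⟨k, hk1⟩
      simpa [hgp] using this
    have hkey := key_pos (x t) (m t) hmt hg i.val (hlt2 i) (by simpa [hgp] using hit)
    rw [hd]
    simp only
    rw [hH, hH]
    exact hkey
  -- the right-slope estimate
  have hslope : ∀ t ∈ Set.Ico (0:ℝ) T, ∀ c : ℝ,
      (∀ i : Fin (N-1), gp i t = m t → c < d i t) →
      ∀ᶠ z in nhdsWithin t (Set.Ioi t), c < slope m t z := by
    intro t ht c hc
    have htT : t < T := ht.2
    have ht' : t ∈ Set.Icc (0:ℝ) T := ⟨ht.1, le_of_lt htT⟩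
    have hL : nhdsWithin t (Set.Ioc t T) = nhdsWithin t (Set.Ioi t) :=
      nhdsWithin_Ioc_eq_nhdsGT htT
    have hsub1 : Set.Ioc t T ⊆ Set.Icc (0:ℝ) T := fun z hz => ⟨le_trans ht.1 (le_of_lt hz.1), hz.2⟩
    have hsub2 : Set.Ioc t T ⊆ Set.Icc (0:ℝ) T \ {t} :=
      fun z hz => ⟨hsub1 hz, by simp [ne_of_gt hz.1]⟩
    have hLle1 : nhdsWithin t (Set.Ioc t T) ≤ nhdsWithin t (Set.Icc (0:ℝ) T) :=
      nhdsWithin_mono t hsub1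
    have hLle2 : nhdsWithin t (Set.Ioc t T) ≤ nhdsWithin t (Set.Icc (0:ℝ) T \ {t}) :=
      nhdsWithin_mono t hsub2
    -- inactive margin η
    set In : Finset (Fin (N-1)) := Finset.univ.filter (fun i => gp i t ≠ m t) with hIn
    set η : ℝ := if hIn2 : In.Nonempty then (In.inf' hIn2 (fun i => gp i t - m t))/2 else 1 with hη
    have hηpos : 0 < η := by
      rw [hη]; split_ifs with h2
      · apply div_pos _ (by norm_num)
        rw [Finset.lt_inf'_iff]
        intro i hi
        have hi' : gp i t ≠ m t := by simpa [hIn] using hi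
        have := lt_of_le_of_ne (hmle t i) (Ne.symm hi')
        linarith
      · norm_num
    have hη2 : ∀ i : Fin (N-1), gp i t ≠ m t → m t + 2*η ≤ gp i t := by
      intro i hi
      have hiIn : i ∈ In := by simp [hIn, hi]
      have h2 : In.Nonempty := ⟨i, hiIn⟩
      have h4 : η = (In.inf' h2 (fun i => gp i t - m t))/2 := by rw [hη, dif_pos h2]
      have hle : In.inf' h2 (fun i => gp i t - m t) ≤ gp i t - m t := Finset.inf'_le _ hiIn
      have h5 : 2 * η ≤ gp i t - m t := by
        have h6 : 2 * η = In.inf' h2 (fun i => gp i t - m t) := by rw [h4]; ring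
        rw [h6]; exact hle
      linarith
    -- eventual facts
    have E0 : ∀ᶠ z in nhdsWithin t (Set.Ioi t), z ∈ Set.Ioc t T := by
      rw [← hL]; exact eventually_mem_nhdsWithin
    have E1 : ∀ᶠ z in nhdsWithin t (Set.Ioi t),
        ∀ i : Fin (N-1), gp i t ≠ m t → m t + η < gp i z := by
      rw [← hL, eventually_all]
      intro i
      by_cases hi : gp i t = m t
      · exact Filter.Eventually.of_forall (fun z h => absurd hi h)
      · have htend : Filter.Tendsto (gp i) (nhdsWithin t (Set.Ioc t T)) (nhds (gp i t)) :=
          ((hderiv i t ht').continuousWithinAt).mono_left hLle1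
        have hlt : m t + η < gp i t := by have := hη2 i hi; linarith
        filter_upwards [htend.eventually_const_lt hlt] with z hz using fun _ => hz
    have E2 : ∀ᶠ z in nhdsWithin t (Set.Ioi t),
        ∀ i : Fin (N-1), gp i t = m t → c < slope (gp i) t z := by
      rw [← hL, eventually_all]
      intro i
      by_cases hi : gp i t = m t
      · have htend : Filter.Tendsto (slope (gp i) t) (nhdsWithin t (Set.Ioc t T))
            (nhds (d i t)) :=
          (hasDerivWithinAt_iff_tendsto_slope.mp (hderiv i t ht')).mono_left hLle2
        filter_upwards [htend.eventually_const_lt (hc i hi)] with z hz using fun _ => hz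
      · exact Filter.Eventually.of_forall (fun z h => absurd h hi)
    have E3 : ∀ᶠ z in nhdsWithin t (Set.Ioi t), z < t + η/(|c|+1) := by
      have hmem : Set.Ioo t (t + η/(|c|+1)) ∈ nhdsWithin t (Set.Ioi t) :=
        Ioo_mem_nhdsGT_of_mem ⟨le_rfl, by
          have hq : (0:ℝ) < η/(|c|+1) := div_pos hηpos (by positivity)
          linarith⟩
      filter_upwards [hmem] with z hz using hz.2
    filter_upwards [E0, E1, E2, E3] with z hz0 hz1 hz2 hz3
    have hzt : t < z := hz0.1
    have hzt' : 0 < z - t := by linarith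
    obtain ⟨j, hj⟩ := hattain z
    by_cases hact : gp j t = m t
    · have h1 := hz2 j hact
      rw [slope_def_field] at h1 ⊢
      rw [hj, ← hact]
      exact h1
    · have h2 := hz1 j hact
      rw [slope_def_field, lt_div_iff₀ hzt']
      have habs : c ≤ |c| := le_abs_self c
      have h6 : (|c|+1) * (z - t) < η := by
        have h7 : (|c|+1) * (z - t) < (|c|+1) * (η/(|c|+1)) := by
          apply mul_lt_mul_of_pos_left _ (by positivity)
          linarith
        have h8 : (|c|+1) * (η/(|c|+1)) = η := by field_simp
        linarith
      have h9 : η < m z - m t := by rw [hj]; linarith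
      nlinarith [abs_nonneg c]
  -- main monotonicity via the fencing theorem
  intro s hs t' ht' hst
  rcases eq_or_lt_of_le hst with rfl | hstlt
  · exact le_refl _
  have hsub : Set.Icc s t' ⊆ Set.Icc (0:ℝ) T :=
    fun u hu => ⟨le_trans hs.1 hu.1, le_trans hu.2 ht'.2⟩
  have hmono : ∀ u ∈ Set.Icc s t', (fun w => -(m w)) u ≤ (fun _ : ℝ => -(m s)) u := by
    apply image_le_of_liminf_slope_right_le_deriv_boundary
      (f := fun w => -(m w)) (B := fun _ => -(m s)) (B' := fun _ => 0)
    · exact (hcont.mono hsub).neg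
    · exact le_refl _
    · exact continuousOn_const
    · intro u _; exact hasDerivWithinAt_const u _ _
    · intro u hu r hr
      have hu' : u ∈ Set.Ico (0:ℝ) T :=
        ⟨le_trans hs.1 hu.1, lt_of_lt_of_le hu.2 ht'.2⟩
      have hev := hslope u hu' (-r)
        (fun i hi => lt_of_lt_of_le (neg_neg_of_pos hr) (le_of_lt (hdpos u ⟨hu'.1, le_of_lt hu'.2⟩ i hi)))
      have hev2 : ∀ᶠ z in nhdsWithin u (Set.Ioi u), slope (fun w => -(m w)) u z < r := by
        filter_upwards [hev] with z hz
        rw [slope_neg]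
        linarith
      exact hev2.frequently
  have h10 : -(m t') ≤ -(m s) := hmono t' ⟨hst, le_rfl⟩
  linarith
end

section
/- Let N ≥ 2 and let y ∈ ℝ^N with y_1 > y_2 > … > y_N. Define W(x) := 2 Σ_{1 ≤ i < j ≤ N} ln(x_i − x_j) − ‖x‖²/2 on the open chamber {x ∈ ℝ^N : x_1 > … > x_N}. Then W(x) ≤ W(y) for all x in the open chamber (i.e. W is maximal at y) if and only if y_i/2 = Σ_{j ≠ i} 1/(y_i − y_j) for every i = 1,…,N. -/
open Finset

private lemma pair_sum_eq' (N : ℕ) (y v : Fin N → ℝ)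
    (hne : ∀ i j : Fin N, i ≠ j → y i - y j ≠ 0) :
    ∑ p ∈ univ.filter (fun p : Fin N × Fin N => p.1 < p.2),
        (v p.1 - v p.2) / (y p.1 - y p.2)
      = ∑ i, v i * ∑ j ∈ univ.erase i, 1 / (y i - y j) := by
  have step1 : ∑ p ∈ univ.filter (fun p : Fin N × Fin N => p.1 < p.2),
        (v p.1 - v p.2) / (y p.1 - y p.2)
      = ∑ p ∈ univ.filter (fun p : Fin N × Fin N => p.1 < p.2),
        (v p.1 / (y p.1 - y p.2) + v p.2 / (y p.2 - y p.1)) := by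
    apply Finset.sum_congr rfl
    intro p hp
    have h1 : y p.1 - y p.2 ≠ 0 := hne _ _ (ne_of_lt (mem_filter.1 hp).2)
    have h2 : y p.2 - y p.1 ≠ 0 := hne _ _ (ne_of_gt (mem_filter.1 hp).2)
    field_simp
    ring
  rw [step1, Finset.sum_add_distrib]
  have step2 : ∑ p ∈ univ.filter (fun p : Fin N × Fin N => p.1 < p.2),
        v p.2 / (y p.2 - y p.1)
      = ∑ p ∈ univ.filter (fun p : Fin N × Fin N => p.2 < p.1),
        v p.1 / (y p.1 - y p.2) := by
    apply Finset.sum_nbij' Prod.swap Prod.swap <;> simp [Prod.swap]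
  rw [step2]
  have step3 : ∑ p ∈ univ.filter (fun p : Fin N × Fin N => p.1 < p.2),
        v p.1 / (y p.1 - y p.2)
      + ∑ p ∈ univ.filter (fun p : Fin N × Fin N => p.2 < p.1),
        v p.1 / (y p.1 - y p.2)
      = ∑ p ∈ univ.filter (fun p : Fin N × Fin N => p.1 ≠ p.2),
        v p.1 / (y p.1 - y p.2) := by
    rw [← Finset.sum_union]
    · apply Finset.sum_congr _ (fun _ _ => rfl)
      ext p
      simp only [Finset.mem_union, Finset.mem_filter, Finset.mem_univ, true_and]
      constructor
      · rintro (h | h)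
        exacts [ne_of_lt h, ne_of_gt h]
      · exact fun h => lt_or_gt_of_ne h
    · rw [Finset.disjoint_filter]
      intro p _ h1 h2
      exact absurd h2 (not_lt_of_gt h1)
  rw [step3]
  rw [Finset.sum_filter]
  rw [Fintype.sum_prod_type]
  apply Finset.sum_congr rfl
  intro i _
  rw [Finset.mul_sum]
  rw [← Finset.sum_filter]
  have : (univ.filter (fun j : Fin N => i ≠ j)) = univ.erase i := by
    ext j; simp [ne_comm, eq_comm]
  rw [this]
  apply Finset.sum_congr rfl
  intro j _
  rw [mul_one_div]

private lemma W_coord' (N : ℕ) (W : EuclideanSpace ℝ (Fin N) → ℝ)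
    (hW : ∀ x, W x = 2 * (∑ p ∈ Finset.univ.filter (fun p : Fin N × Fin N => p.1 < p.2),
        Real.log (x p.1 - x p.2)) - ‖x‖ ^ 2 / 2) (z : EuclideanSpace ℝ (Fin N)) :
    W z = 2 * (∑ p ∈ Finset.univ.filter (fun p : Fin N × Fin N => p.1 < p.2),
        Real.log (z p.1 - z p.2)) - (∑ j, z j ^ 2) / 2 := by
  rw [hW]
  congr 2
  rw [EuclideanSpace.norm_eq, Real.sq_sqrt (by positivity)]
  simp [sq_abs]

private lemma hasDerivAt_line' (N : ℕ) (y v : EuclideanSpace ℝ (Fin N))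
    (hy : ∀ i j : Fin N, i < j → y j < y i)
    (W : EuclideanSpace ℝ (Fin N) → ℝ)
    (hW : ∀ x, W x = 2 * (∑ p ∈ Finset.univ.filter (fun p : Fin N × Fin N => p.1 < p.2),
        Real.log (x p.1 - x p.2)) - ‖x‖ ^ 2 / 2) :
    HasDerivAt (fun t : ℝ => W (y + t • v))
      (2 * (∑ p ∈ Finset.univ.filter (fun p : Fin N × Fin N => p.1 < p.2),
          (v p.1 - v p.2) / (y p.1 - y p.2)) - ∑ j, y j * v j) 0 := by
  have hfun : ∀ t : ℝ, W (y + t • v) =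
      2 * (∑ p ∈ univ.filter (fun p : Fin N × Fin N => p.1 < p.2),
          Real.log ((y p.1 - y p.2) + t * (v p.1 - v p.2)))
        - (∑ j, (y j + t * v j) ^ 2) / 2 := by
    intro t
    rw [W_coord' N W hW]
    have e1 : ∀ p : Fin N × Fin N,
        (y + t • v) p.1 - (y + t • v) p.2 = (y p.1 - y p.2) + t * (v p.1 - v p.2) := by
      intro p
      simp [PiLp.add_apply, PiLp.smul_apply, smul_eq_mul]
      ring
    have e2 : ∀ j, (y + t • v) j = y j + t * v j := by
      intro j
      simp [PiLp.add_apply, PiLp.smul_apply, smul_eq_mul]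
    simp only [e1, e2]
    congr 2
    apply Finset.sum_congr rfl
    intro p _
    congr 1
    ring
  simp only [hfun]
  have h1 : HasDerivAt (fun t : ℝ => ∑ p ∈ univ.filter (fun p : Fin N × Fin N => p.1 < p.2),
        Real.log ((y p.1 - y p.2) + t * (v p.1 - v p.2)))
      (∑ p ∈ univ.filter (fun p : Fin N × Fin N => p.1 < p.2),
        (v p.1 - v p.2) / (y p.1 - y p.2)) 0 := by
    apply HasDerivAt.fun_sum
    intro p hp
    have hc : (0:ℝ) < y p.1 - y p.2 := sub_pos.2 (hy _ _ (mem_filter.1 hp).2)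
    have haff : HasDerivAt (fun t : ℝ => (y p.1 - y p.2) + t * (v p.1 - v p.2))
        (v p.1 - v p.2) 0 := by
      simpa using ((hasDerivAt_id (0:ℝ)).mul_const (v p.1 - v p.2)).const_add (y p.1 - y p.2)
    have := haff.log (by simpa using hc.ne')
    simpa using this
  have h2 : HasDerivAt (fun t : ℝ => ∑ j, (y j + t * v j) ^ 2) (∑ j, 2 * y j * v j) 0 := by
    apply HasDerivAt.fun_sum
    intro j _
    have haff : HasDerivAt (fun t : ℝ => y j + t * v j) (v j) 0 := by
      simpa using ((hasDerivAt_id (0:ℝ)).mul_const (v j)).const_add (y j)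
    have := haff.pow 2
    norm_num at this
    exact this
  have := (h1.const_mul 2).fun_sub (h2.div_const 2)
  refine this.congr_deriv ?_
  rw [Finset.sum_div]
  congr 1
  apply Finset.sum_congr rfl
  intro j _
  ring

private lemma slope_ineq' (N : ℕ) (y x : EuclideanSpace ℝ (Fin N))
    (hy : ∀ i j : Fin N, i < j → y j < y i)
    (hx : ∀ i j : Fin N, i < j → x j < x i)
    (W : EuclideanSpace ℝ (Fin N) → ℝ)
    (hW : ∀ x, W x = 2 * (∑ p ∈ Finset.univ.filter (fun p : Fin N × Fin N => p.1 < p.2),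
        Real.log (x p.1 - x p.2)) - ‖x‖ ^ 2 / 2) :
    ∀ t ∈ Set.Ioc (0:ℝ) 1, W x - W y ≤ (W (y + t • (x - y)) - W y) / t := by
  rintro t ⟨ht0, ht1⟩
  rw [le_div_iff₀ ht0]
  set z : EuclideanSpace ℝ (Fin N) := y + t • (x - y) with hz
  have hzc : ∀ j, z j = (1 - t) * y j + t * x j := by
    intro j
    simp [hz, PiLp.add_apply, PiLp.smul_apply, PiLp.sub_apply, smul_eq_mul]
    ring
  suffices h : (1 - t) * W y + t * W x ≤ W z by nlinarith [h]
  have hlog : ∑ p ∈ univ.filter (fun p : Fin N × Fin N => p.1 < p.2),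
      ((1 - t) * Real.log (y p.1 - y p.2) + t * Real.log (x p.1 - x p.2))
      ≤ ∑ p ∈ univ.filter (fun p : Fin N × Fin N => p.1 < p.2),
      Real.log (z p.1 - z p.2) := by
    apply Finset.sum_le_sum
    intro p hp
    have hcy : (0:ℝ) < y p.1 - y p.2 := sub_pos.2 (hy _ _ (mem_filter.1 hp).2)
    have hcx : (0:ℝ) < x p.1 - x p.2 := sub_pos.2 (hx _ _ (mem_filter.1 hp).2)
    have := strictConcaveOn_log_Ioi.concaveOn.2 (Set.mem_Ioi.2 hcy) (Set.mem_Ioi.2 hcx)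
      (by linarith : (0:ℝ) ≤ 1 - t) ht0.le (by ring)
    simp only [smul_eq_mul] at this
    have hzp : z p.1 - z p.2 = (1 - t) * (y p.1 - y p.2) + t * (x p.1 - x p.2) := by
      rw [hzc, hzc]; ring
    rw [hzp]
    exact this
  have hsq : ∑ j, z j ^ 2 ≤ ∑ j, ((1 - t) * y j ^ 2 + t * x j ^ 2) := by
    apply Finset.sum_le_sum
    intro j _
    rw [hzc]
    nlinarith [sq_nonneg (y j - x j),
      mul_nonneg (mul_nonneg ht0.le (by linarith : (0:ℝ) ≤ 1 - t)) (sq_nonneg (y j - x j))]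
  have ey := W_coord' N W hW y
  have ex := W_coord' N W hW x
  have ez := W_coord' N W hW z
  rw [Finset.sum_add_distrib, ← Finset.mul_sum, ← Finset.mul_sum] at hlog
  rw [Finset.sum_add_distrib, ← Finset.mul_sum, ← Finset.mul_sum] at hsq
  rw [ey, ex, ez]
  nlinarith [hlog, hsq]

private lemma chamber_isOpen' (N : ℕ) :
    IsOpen {x : EuclideanSpace ℝ (Fin N) | ∀ i j : Fin N, i < j → x j < x i} := by
  have : {x : EuclideanSpace ℝ (Fin N) | ∀ i j : Fin N, i < j → x j < x i}
      = ⋂ i, ⋂ j, ⋂ (_ : i < j), {x : EuclideanSpace ℝ (Fin N) | x j < x i} := by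
    ext x; simp [Set.mem_iInter]
  rw [this]
  apply isOpen_iInter_of_finite
  intro i
  apply isOpen_iInter_of_finite
  intro j
  apply isOpen_iInter_of_finite
  intro _
  exact isOpen_lt (EuclideanSpace.proj j).continuous (EuclideanSpace.proj i).continuous

/-- For `N ≥ 2` and `y` in the open Weyl chamber of type `A`, the
function `W(x) = 2 ∑_{i<j} ln(x_i − x_j) − ‖x‖²/2` is maximal at `y` (among points of
the open chamber) if and only if `y_i/2 = ∑_{j ≠ i} 1/(y_i − y_j)` for all `i`. -/
theorem W_max_iff_stationary_A (N : ℕ) (hN : 2 ≤ N)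
    (y : EuclideanSpace ℝ (Fin N))
    (hy : ∀ i j : Fin N, i < j → y j < y i)
    (W : EuclideanSpace ℝ (Fin N) → ℝ)
    (hW : ∀ x, W x = 2 * (∑ p ∈ Finset.univ.filter (fun p : Fin N × Fin N => p.1 < p.2),
        Real.log (x p.1 - x p.2)) - ‖x‖ ^ 2 / 2) :
    (∀ x : EuclideanSpace ℝ (Fin N), (∀ i j : Fin N, i < j → x j < x i) → W x ≤ W y)
      ↔ (∀ i : Fin N, y i / 2 = ∑ j ∈ Finset.univ.erase i, 1 / (y i - y j)) := by
  classical
  have hne : ∀ i j : Fin N, i ≠ j → y i - y j ≠ 0 := by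
    intro i j hij
    rcases lt_or_gt_of_ne hij with h | h
    · exact sub_ne_zero.2 (ne_of_gt (hy i j h))
    · exact sub_ne_zero.2 (ne_of_lt (hy j i h))
  constructor
  · -- maximality → stationarity
    intro hmax i
    set e : EuclideanSpace ℝ (Fin N) := EuclideanSpace.single i (1:ℝ) with he
    have hd := hasDerivAt_line' N y e hy W hW
    have hloc : IsLocalMax (fun t : ℝ => W (y + t • e)) 0 := by
      have hcont : Continuous (fun t : ℝ => y + t • e) :=
        continuous_const.add (continuous_id.smul continuous_const)
      have hmem : (fun t : ℝ => y + t • e) ⁻¹'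
          {x : EuclideanSpace ℝ (Fin N) | ∀ i j : Fin N, i < j → x j < x i} ∈ nhds (0:ℝ) := by
        apply ((chamber_isOpen' N).preimage hcont).mem_nhds
        simpa using hy
      filter_upwards [hmem] with t ht
      have h1 : W (y + t • e) ≤ W y := hmax _ ht
      simpa using h1
    have hzero := hloc.hasDerivAt_eq_zero hd
    rw [pair_sum_eq' N y (fun k => e k) hne] at hzero
    have hA : ∑ k, e k * ∑ j ∈ univ.erase k, 1 / (y k - y j)
        = ∑ j ∈ univ.erase i, 1 / (y i - y j) := by
      rw [Finset.sum_eq_single i]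
      · simp [he, EuclideanSpace.single_apply]
      · intro k _ hk
        simp [he, EuclideanSpace.single_apply, hk]
      · simp
    have hB : ∑ j, y j * e j = y i := by
      rw [Finset.sum_eq_single i]
      · simp [he, EuclideanSpace.single_apply]
      · intro k _ hk
        simp [he, EuclideanSpace.single_apply, hk]
      · simp
    rw [hA, hB] at hzero
    linarith
  · -- stationarity → maximality
    intro hstat x hx
    set v : EuclideanSpace ℝ (Fin N) := x - y with hv
    have hd := hasDerivAt_line' N y v hy W hW
    have hD0 : 2 * (∑ p ∈ Finset.univ.filter (fun p : Fin N × Fin N => p.1 < p.2),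
          (v p.1 - v p.2) / (y p.1 - y p.2)) - ∑ j, y j * v j = 0 := by
      rw [pair_sum_eq' N y (fun k => v k) hne]
      have : ∑ k, v k * ∑ j ∈ univ.erase k, 1 / (y k - y j) = ∑ k, v k * (y k / 2) := by
        apply Finset.sum_congr rfl
        intro k _
        rw [← hstat k]
      rw [this, Finset.mul_sum, ← Finset.sum_sub_distrib]
      apply Finset.sum_eq_zero
      intro k _
      ring
    rw [hD0] at hd
    have hslope : Filter.Tendsto (slope (fun t : ℝ => W (y + t • v)) 0)
        (nhdsWithin 0 (Set.Ioi (0:ℝ))) (nhds 0) :=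
      (hasDerivAt_iff_tendsto_slope.1 hd).mono_left
        (nhdsWithin_mono _ (fun t ht => by simpa using ne_of_gt ht))
    have hev : ∀ᶠ t in nhdsWithin 0 (Set.Ioi (0:ℝ)),
        W x - W y ≤ slope (fun t : ℝ => W (y + t • v)) 0 t := by
      filter_upwards [Ioc_mem_nhdsGT_of_mem (Set.mem_Ico.mpr ⟨le_refl (0:ℝ), zero_lt_one⟩)]
        with t ht
      have h1 := slope_ineq' N y x hy hx W hW t ht
      rw [slope_def_field]
      simpa using h1
    have hfin : W x - W y ≤ 0 := ge_of_tendsto hslope hev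
    linarith
end

section
/- Let N ≥ 1 and let y ∈ ℝ^N with y_1 > y_2 > … > y_N. Then y_i/2 = Σ_{j ≠ i} 1/(y_i − y_j) holds for every i = 1,…,N if and only if He_N(y_i) = 0 for every i = 1,…,N (equivalently, the entries of y are exactly the N ordered zeros of He_N; equivalently, the entries of y/√2 are the ordered zeros of the physicists' Hermite polynomial H_N). -/
open Polynomial Finset

lemma myDerivProd {ι : Type*} [DecidableEq ι] (s : Finset ι) (f : ι → ℝ[X]) :
    derivative (∏ i ∈ s, f i) = ∑ i ∈ s, (∏ j ∈ s.erase i, f j) * derivative (f i) := by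
  rw [Finset.prod_eq_multiset_prod, Polynomial.derivative_prod, Finset.sum_eq_multiset_sum]
  congr 1

lemma derivative_hermite_succ' (n : ℕ) :
    derivative (hermite (n + 1)) = ((n : ℤ[X]) + 1) * hermite n := by
  induction n with
  | zero => simp [hermite_one]
  | succ n ih =>
    have hs : X * hermite n - derivative (hermite n) = hermite (n + 1) :=
      (hermite_succ n).symm
    rw [hermite_succ (n + 1), ih]
    simp only [derivative_sub, derivative_mul, derivative_add, derivative_natCast,
      derivative_one, add_zero, zero_add, zero_mul, derivative_X, one_mul]
    rw [ih]
    push_cast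
    linear_combination ((n : ℤ[X]) + 1) * hs

lemma hermite_ode (n : ℕ) :
    derivative (derivative (hermite n)) + (n : ℤ[X]) * hermite n
      = X * derivative (hermite n) := by
  cases n with
  | zero => simp
  | succ n =>
    have hs : X * hermite n - derivative (hermite n) = hermite (n + 1) :=
      (hermite_succ n).symm
    rw [derivative_hermite_succ']
    simp only [derivative_mul, derivative_add, derivative_natCast, derivative_one,
      add_zero, zero_add, zero_mul]
    push_cast
    linear_combination (-(n : ℤ[X]) - 1) * hs

/-- For `N ≥ 1` and `y_1 > ⋯ > y_N`, the stationarity equations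
`y_i/2 = ∑_{j ≠ i} 1/(y_i − y_j)` (for all `i`) hold if and only if every `y_i` is a
zero of the probabilists' Hermite polynomial `He_N` (Mathlib's `Polynomial.hermite N`). -/
theorem stationary_iff_hermite_zeros (N : ℕ) (hN : 1 ≤ N)
    (y : Fin N → ℝ)
    (hy : ∀ i j : Fin N, i < j → y j < y i) :
    (∀ i : Fin N, y i / 2 = ∑ j ∈ Finset.univ.erase i, 1 / (y i - y j))
      ↔ (∀ i : Fin N, Polynomial.aeval (y i) (Polynomial.hermite N) = 0) := by
  classical
  have hanti : StrictAnti y := fun a b h => hy a b h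
  have hinj : Function.Injective y := hanti.injective
  have hne : ∀ {i j : Fin N}, j ≠ i → y i - y j ≠ 0 := by
    intro i j hij
    exact sub_ne_zero.mpr fun e => hij (hinj e.symm)
  set p : ℝ[X] := ∏ i, (X - C (y i)) with hpdef
  have hpm : p.Monic := monic_prod_of_monic _ _ fun i _ => monic_X_sub_C _
  have hpd : p.natDegree = N := by
    rw [hpdef, natDegree_prod _ _ fun i _ => X_sub_C_ne_zero (y i)]
    simp
  have hroot : ∀ i, p.eval (y i) = 0 := by
    intro i
    rw [hpdef, eval_prod]
    exact Finset.prod_eq_zero (mem_univ i) (by simp)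
  -- evaluation of derivatives of p at the roots
  have hq : ∀ i : Fin N, p = (X - C (y i)) * ∏ j ∈ univ.erase i, (X - C (y j)) :=
    fun i => (Finset.mul_prod_erase univ _ (mem_univ i)).symm
  have hevalq : ∀ i : Fin N, eval (y i) (∏ j ∈ univ.erase i, (X - C (y j)))
      = ∏ j ∈ univ.erase i, (y i - y j) := by
    intro i; rw [eval_prod]; simp
  have hevalq' : ∀ i : Fin N, eval (y i) (derivative (∏ j ∈ univ.erase i, (X - C (y j))))
      = ∑ j ∈ univ.erase i, ∏ k ∈ (univ.erase i).erase j, (y i - y k) := by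
    intro i
    rw [myDerivProd, eval_finset_sum]
    refine Finset.sum_congr rfl fun j hj => ?_
    simp [eval_prod]
  have hd1 : ∀ i : Fin N, eval (y i) (derivative p) = ∏ j ∈ univ.erase i, (y i - y j) := by
    intro i
    rw [hq i, derivative_mul]
    simp [hevalq i]
  have hd2 : ∀ i : Fin N, eval (y i) (derivative (derivative p))
      = 2 * ∑ j ∈ univ.erase i, ∏ k ∈ (univ.erase i).erase j, (y i - y k) := by
    intro i
    rw [hq i]
    simp only [derivative_mul, derivative_add, derivative_sub, derivative_X, derivative_C,
      derivative_one, sub_zero, one_mul, zero_mul, add_zero, zero_add]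
    simp only [eval_add, eval_mul, eval_sub, eval_X, eval_C, sub_self, zero_mul, add_zero,
      zero_add, mul_zero]
    rw [hevalq' i]
    ring
  -- per-index equivalence with the polynomial identity
  have statEq : ∀ i : Fin N,
      (y i / 2 = ∑ j ∈ Finset.univ.erase i, 1 / (y i - y j))
        ↔ eval (y i) (derivative (derivative p)) = y i * eval (y i) (derivative p) := by
    intro i
    set P : ℝ := ∏ j ∈ univ.erase i, (y i - y j) with hPdef
    set D : ℝ := ∑ j ∈ univ.erase i, ∏ k ∈ (univ.erase i).erase j, (y i - y k) with hDdef
    have hP : P ≠ 0 := Finset.prod_ne_zero_iff.mpr fun j hj => hne (Finset.ne_of_mem_erase hj)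
    have hsum : ∑ j ∈ Finset.univ.erase i, 1 / (y i - y j) = D / P := by
      rw [hDdef, Finset.sum_div]
      apply Finset.sum_congr rfl
      intro j hj
      have hPj : P = (y i - y j) * ∏ k ∈ (univ.erase i).erase j, (y i - y k) :=
        (Finset.mul_prod_erase _ _ hj).symm
      have ha : y i - y j ≠ 0 := hne (Finset.ne_of_mem_erase hj)
      have hb : (∏ k ∈ (univ.erase i).erase j, (y i - y k)) ≠ 0 :=
        Finset.prod_ne_zero_iff.mpr fun k hk =>
          hne (Finset.ne_of_mem_erase (Finset.mem_of_mem_erase hk))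
      rw [hPj]
      field_simp
    rw [hsum, hd1 i, hd2 i, ← hPdef, ← hDdef, div_eq_div_iff (two_ne_zero) hP]
    constructor
    · intro h; linarith
    · intro h; linarith
  constructor
  · -- stationarity → roots of hermite
    intro hstat
    set qq : ℝ[X] := derivative (derivative p) + C (N : ℝ) * p - X * derivative p with hqq
    have hqq0 : qq = 0 := by
      by_cases h0 : qq = 0
      · exact h0
      refine eq_zero_of_natDegree_lt_card_of_eval_eq_zero qq hinj ?_ ?_
      · intro i
        simp only [hqq, eval_sub, eval_add, eval_mul, eval_C, eval_X]
        rw [hroot i, (statEq i).mp (hstat i)]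
        ring
      · rw [Fintype.card_fin, natDegree_lt_iff_degree_lt h0, degree_lt_iff_coeff_zero]
        intro m hm
        have hm' : N ≤ m := by exact_mod_cast hm
        obtain ⟨k, rfl⟩ : ∃ k, m = k + 1 := ⟨m - 1, by omega⟩
        have h1 : p.coeff (k + 1 + 1 + 1) = 0 :=
          coeff_eq_zero_of_natDegree_lt (by omega : p.natDegree < k + 1 + 1 + 1)
        have h2 : qq.coeff (k + 1) = ((N : ℝ) - (k + 1)) * p.coeff (k + 1) := by
          simp only [hqq, coeff_sub, coeff_add, coeff_derivative, coeff_C_mul, coeff_X_mul,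
            h1, zero_mul, add_zero, zero_add]
          ring
        rcases eq_or_lt_of_le hm' with he | hl
        · have hcN : p.coeff (k + 1) = 1 := by
            rw [← he, ← hpd, coeff_natDegree]; exact hpm.leadingCoeff
          rw [h2, hcN, mul_one, he]
          push_cast
          ring
        · rw [h2, coeff_eq_zero_of_natDegree_lt (by omega : p.natDegree < k + 1), mul_zero]
    have hODEp : derivative (derivative p) + C (N : ℝ) * p = X * derivative p := by
      have := hqq0
      rw [hqq, sub_eq_zero] at this
      exact this
    -- the real hermite polynomial
    set h : ℝ[X] := (hermite N).map (algebraMap ℤ ℝ) with hhdef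
    have hhm : h.Monic := (hermite_monic N).map _
    have hhd : h.natDegree = N := by
      rw [hhdef, natDegree_map_eq_of_injective (algebraMap ℤ ℝ).injective_int, natDegree_hermite]
    have hODEh : derivative (derivative h) + C (N : ℝ) * h = X * derivative h := by
      have := congrArg (Polynomial.map (algebraMap ℤ ℝ)) (hermite_ode N)
      simpa [hhdef, ← derivative_map, Polynomial.map_add, Polynomial.map_mul, Polynomial.map_natCast,
        C_eq_natCast] using this
    have hreq : p = h := by
      by_contra hph
      set r : ℝ[X] := p - h with hrdef
      have hr0 : r ≠ 0 := sub_ne_zero.mpr hph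
      have hODEr : derivative (derivative r) + C (N : ℝ) * r = X * derivative r := by
        simp only [hrdef, derivative_sub, mul_sub]
        linear_combination hODEp - hODEh
      have hdlt : r.natDegree < N := by
        rw [natDegree_lt_iff_degree_lt hr0]
        have : degree r < degree p := by
          apply degree_sub_lt
          · rw [degree_eq_natDegree hpm.ne_zero, degree_eq_natDegree hhm.ne_zero, hpd, hhd]
          · exact hpm.ne_zero
          · rw [hpm.leadingCoeff, hhm.leadingCoeff]
        calc degree r < degree p := this
          _ = (N : WithBot ℕ) := by rw [degree_eq_natDegree hpm.ne_zero, hpd]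
      have hc : r.coeff r.natDegree ≠ 0 := by
        rw [coeff_natDegree]
        exact leadingCoeff_ne_zero.mpr hr0
      have hcd := congrArg (fun s : ℝ[X] => s.coeff r.natDegree) hODEr
      have hhigh : r.coeff (r.natDegree + 1 + 1) = 0 :=
        coeff_eq_zero_of_natDegree_lt (by omega)
      simp only [coeff_add, coeff_derivative, coeff_C_mul, hhigh, zero_mul, zero_add] at hcd
      rcases Nat.eq_zero_or_pos r.natDegree with hd0 | hdpos
      · rw [hd0, mul_coeff_zero, coeff_X_zero, zero_mul] at hcd
        have hNne : (N : ℝ) ≠ 0 := Nat.cast_ne_zero.mpr (by omega)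
        rw [hd0] at hc
        rcases mul_eq_zero.mp hcd with hh | hh
        exacts [hNne hh, hc hh]
      · obtain ⟨e, hde⟩ : ∃ e, r.natDegree = e + 1 := ⟨r.natDegree - 1, by omega⟩
        rw [hde, coeff_X_mul, coeff_derivative, ← hde] at hcd
        have hcast : (e : ℝ) + 1 = (r.natDegree : ℝ) := by rw [hde]; push_cast; ring
        rw [hcast] at hcd
        have hz : ((N : ℝ) - r.natDegree) * r.coeff r.natDegree = 0 := by
          linear_combination hcd
        rcases mul_eq_zero.mp hz with hh | hh
        · have h3 : (N : ℝ) = r.natDegree := by linarith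
          have h4 : N = r.natDegree := by exact_mod_cast h3
          omega
        · exact hc hh
    intro i
    have : eval (y i) h = 0 := by rw [← hreq]; exact hroot i
    rw [aeval_def, ← eval_map]
    exact this
  · -- roots of hermite → stationarity
    intro hz
    set h : ℝ[X] := (hermite N).map (algebraMap ℤ ℝ) with hhdef
    have hhm : h.Monic := (hermite_monic N).map _
    have hhd : h.natDegree = N := by
      rw [hhdef, natDegree_map_eq_of_injective (algebraMap ℤ ℝ).injective_int, natDegree_hermite]
    have hhroot : ∀ i, eval (y i) h = 0 := by
      intro i
      have := hz i
      rwa [aeval_def, ← eval_map] at this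
    have hph : p = h := by
      by_contra hne'
      have hr0 : h - p ≠ 0 := sub_ne_zero.mpr (fun e => hne' e.symm)
      have hdlt : (h - p).natDegree < N := by
        rw [natDegree_lt_iff_degree_lt hr0]
        calc degree (h - p) < degree h := by
              apply degree_sub_lt
              · rw [degree_eq_natDegree hhm.ne_zero, degree_eq_natDegree hpm.ne_zero, hpd, hhd]
              · exact hhm.ne_zero
              · rw [hpm.leadingCoeff, hhm.leadingCoeff]
          _ = (N : WithBot ℕ) := by rw [degree_eq_natDegree hhm.ne_zero, hhd]
      have : h - p = 0 := by
        refine eq_zero_of_natDegree_lt_card_of_eval_eq_zero _ hinj ?_ ?_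
        · intro i; simp [hhroot i, hroot i]
        · rwa [Fintype.card_fin]
      exact hr0 this
    have hODEh : derivative (derivative h) + C (N : ℝ) * h = X * derivative h := by
      have := congrArg (Polynomial.map (algebraMap ℤ ℝ)) (hermite_ode N)
      simpa [hhdef, ← derivative_map, Polynomial.map_add, Polynomial.map_mul, Polynomial.map_natCast,
        C_eq_natCast] using this
    intro i
    refine (statEq i).mpr ?_
    have := congrArg (eval (y i)) hODEh
    simp only [eval_add, eval_mul, eval_C, eval_X] at this
    rw [← hph] at this
    rw [hroot i] at this
    linarith [this]
end

section
/- Let N ≥ 2 and let z ∈ ℝ^N with z_1 > … > z_N satisfy z_i = Σ_{j ≠ i} 1/(z_i − z_j) for every i = 1,…,N (i.e. z is the vector of ordered zeros of the Hermite polynomial H_N divided by √2). Then for each c > 0 the curve x(t) := √(2t + c²) · z satisfies x(0) = c·z, takes values in the open chamber {x : x_1 > … > x_N}, and solves x'(t) = H^A(x(t)) for all t ≥ 0. -/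
/-- If `z_1 > ⋯ > z_N` satisfies `z_i = ∑_{j ≠ i} 1/(z_i − z_j)` for
all `i`, then for every `c > 0` the curve `x(t) = √(2t + c²) · z` starts at `c·z`,
stays in the open Weyl chamber of type `A` for `t ≥ 0`, and solves `x' = H^A(x)`. -/
theorem explicit_solution_A (N : ℕ) (hN : 2 ≤ N)
    (H : EuclideanSpace ℝ (Fin N) → EuclideanSpace ℝ (Fin N))
    (hH : ∀ x, ∀ i : Fin N, H x i = ∑ j ∈ Finset.univ.erase i, 1 / (x i - x j))
    (z : EuclideanSpace ℝ (Fin N))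
    (hz : ∀ i j : Fin N, i < j → z j < z i)
    (hstat : ∀ i : Fin N, z i = ∑ j ∈ Finset.univ.erase i, 1 / (z i - z j))
    (c : ℝ) (hc : 0 < c)
    (x : ℝ → EuclideanSpace ℝ (Fin N))
    (hx : ∀ t, x t = Real.sqrt (2 * t + c ^ 2) • z) :
    x 0 = c • z
      ∧ (∀ t ≥ (0:ℝ), ∀ i j : Fin N, i < j → x t j < x t i)
      ∧ (∀ t ≥ (0:ℝ), HasDerivAt x (H (x t)) t) := by
  have hs : ∀ t : ℝ, 0 ≤ t → 0 < 2 * t + c ^ 2 := fun t ht => by positivity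
  have hsqrt : ∀ t : ℝ, 0 ≤ t → 0 < Real.sqrt (2 * t + c ^ 2) := fun t ht =>
    Real.sqrt_pos.mpr (hs t ht)
  refine ⟨?_, ?_, ?_⟩
  · rw [hx 0]
    norm_num [Real.sqrt_sq hc.le]
  · intro t ht i j hij
    rw [hx t]
    have := hsqrt t ht
    simp only [PiLp.smul_apply, smul_eq_mul]
    exact mul_lt_mul_of_pos_left (hz i j hij) this
  · intro t ht
    set s : ℝ := 2 * t + c ^ 2 with hsdef
    have hs' : 0 < s := hs t ht
    have hsq : 0 < Real.sqrt s := hsqrt t ht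
    have hkey : H (x t) = (1 / Real.sqrt s) • z := by
      ext i
      rw [hH]
      simp only [PiLp.smul_apply, smul_eq_mul, hx t]
      rw [show (1 / Real.sqrt s) * z i = (1 / Real.sqrt s) * ∑ j ∈ Finset.univ.erase i,
        1 / (z i - z j) by rw [← hstat i]]
      rw [Finset.mul_sum]
      refine Finset.sum_congr rfl fun j hj => ?_
      simp only [PiLp.smul_apply, smul_eq_mul]
      rw [← mul_sub]
      field_simp
      rfl
    rw [hkey]
    have hf : HasDerivAt (fun u : ℝ => Real.sqrt (2 * u + c ^ 2)) (1 / Real.sqrt s) t := by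
      have h1 : HasDerivAt (fun u : ℝ => 2 * u + c ^ 2) 2 t := by
        simpa using ((hasDerivAt_id t).const_mul 2).add_const (c ^ 2)
      have h2 := (Real.hasDerivAt_sqrt (ne_of_gt hs')).comp t h1
      refine h2.congr_deriv ?_
      field_simp
    have := hf.smul_const z
    have heq : (fun u : ℝ => Real.sqrt (2 * u + c ^ 2) • z) = x := by
      funext u; rw [hx u]
    rwa [heq] at this
end

section
/- Let N ≥ 2, ν > 0 and let y ∈ ℝ^N with y_1 > y_2 > … > y_N > 0. Define W(x) := 2 Σ_{1 ≤ i < j ≤ N} ln(x_i² − x_j²) + 2ν Σ_{i=1}^N ln x_i − ‖x‖²/2 on the open chamber {x ∈ ℝ^N : x_1 > … > x_N > 0}. Then W(x) ≤ W(y) for all x in the open chamber (i.e. W is maximal at y) if and only if y_i/2 = Σ_{j ≠ i} (1/(y_i − y_j) + 1/(y_i + y_j)) + ν/y_i for every i = 1,…,N. -/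
open Finset

lemma pair_sum {N : ℕ} (G : Fin N → Fin N → ℝ) :
    ∑ p ∈ Finset.univ.filter (fun p : Fin N × Fin N => p.1 < p.2), (G p.1 p.2 + G p.2 p.1)
      = ∑ i, ∑ j ∈ Finset.univ.erase i, G i j := by
  rw [Finset.sum_filter, Fintype.sum_prod_type]
  have h2 : ∀ i : Fin N, ∑ j ∈ Finset.univ.erase i, G i j
      = (∑ j, if i < j then G i j else 0) + ∑ j, if j < i then G i j else 0 := by
    intro i
    rw [← Finset.sum_add_distrib,
      show (Finset.univ.erase i) = Finset.univ.filter (fun j => j ≠ i) by ext j; simp,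
      Finset.sum_filter]
    refine Finset.sum_congr rfl fun j _ => ?_
    rcases lt_trichotomy i j with h|h|h
    · simp [h, h.ne', not_lt_of_gt h]
    · simp [h]
    · simp [h, h.ne, not_lt_of_gt h]
  simp_rw [h2]
  rw [Finset.sum_add_distrib]
  have h3 : ∀ (i j : Fin N), (if i < j then G i j + G j i else 0)
      = (if i < j then G i j else 0) + (if i < j then G j i else 0) := by
    intro i j; split <;> simp
  simp_rw [h3, Finset.sum_add_distrib]
  congr 1
  rw [Finset.sum_comm]

lemma normsq {N : ℕ} (x : EuclideanSpace ℝ (Fin N)) : ‖x‖ ^ 2 = ∑ i, x i ^ 2 := by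
  rw [EuclideanSpace.norm_eq, Real.sq_sqrt (by positivity)]
  simp [sq_abs]

lemma loglin (a b : ℝ) (ha : 0 < a) (hb : 0 < b) : Real.log a ≤ Real.log b + (a - b) / b := by
  have h := Real.log_le_sub_one_of_pos (div_pos ha hb)
  rw [Real.log_div ha.ne' hb.ne'] at h
  have : a / b - 1 = (a - b) / b := by field_simp
  linarith [this ▸ h]

lemma pairbound (a b c e : ℝ) (hab : b < a) (hb : 0 < b) (hce : e < c) (he : 0 < e) :
    Real.log (c ^ 2 - e ^ 2) ≤ Real.log (a ^ 2 - b ^ 2)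
      + (((c - a) - (e - b)) / (a - b) + ((c - a) + (e - b)) / (a + b)) := by
  have h1 : c ^ 2 - e ^ 2 = (c - e) * (c + e) := by ring
  have h2 : a ^ 2 - b ^ 2 = (a - b) * (a + b) := by ring
  rw [h1, h2, Real.log_mul (by linarith) (by nlinarith),
    Real.log_mul (by linarith) (by nlinarith)]
  have l1 := loglin (c - e) (a - b) (by linarith) (by linarith)
  have l2 := loglin (c + e) (a + b) (by linarith) (by nlinarith)
  have e1 : ((c - e) - (a - b)) / (a - b) = ((c - a) - (e - b)) / (a - b) := by ring_nf
  have e2 : ((c + e) - (a + b)) / (a + b) = ((c - a) + (e - b)) / (a + b) := by ring_nf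
  linarith [e1 ▸ l1, e2 ▸ l2]

lemma backward {N : ℕ} (ν : ℝ) (hν : 0 < ν) (y x : EuclideanSpace ℝ (Fin N))
    (hy1 : ∀ i j : Fin N, i < j → y j < y i) (hy2 : ∀ i, 0 < y i)
    (hx1 : ∀ i j : Fin N, i < j → x j < x i) (hx2 : ∀ i, 0 < x i)
    (hstat : ∀ i : Fin N, y i / 2
      = (∑ j ∈ Finset.univ.erase i, (1 / (y i - y j) + 1 / (y i + y j))) + ν / y i) :
    2 * (∑ p ∈ Finset.univ.filter (fun p : Fin N × Fin N => p.1 < p.2),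
          Real.log (x p.1 ^ 2 - x p.2 ^ 2)) + 2 * ν * (∑ i, Real.log (x i)) - ‖x‖ ^ 2 / 2
    ≤ 2 * (∑ p ∈ Finset.univ.filter (fun p : Fin N × Fin N => p.1 < p.2),
          Real.log (y p.1 ^ 2 - y p.2 ^ 2)) + 2 * ν * (∑ i, Real.log (y i)) - ‖y‖ ^ 2 / 2 := by
  set P := Finset.univ.filter (fun p : Fin N × Fin N => p.1 < p.2) with hP
  set G : Fin N → Fin N → ℝ := fun i j => (x i - y i) * (1 / (y i - y j) + 1 / (y i + y j)) with hG
  -- pairwise log bound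
  have hA : ∑ p ∈ P, Real.log (x p.1 ^ 2 - x p.2 ^ 2)
      ≤ ∑ p ∈ P, (Real.log (y p.1 ^ 2 - y p.2 ^ 2) + (G p.1 p.2 + G p.2 p.1)) := by
    refine Finset.sum_le_sum fun p hp => ?_
    have hlt : p.1 < p.2 := (Finset.mem_filter.mp hp).2
    have hyq := hy1 p.1 p.2 hlt
    have hxq := hx1 p.1 p.2 hlt
    have := pairbound (y p.1) (y p.2) (x p.1) (x p.2) hyq (hy2 p.2) hxq (hx2 p.2)
    have hne1 : y p.1 - y p.2 ≠ 0 := by linarith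
    have hne2 : y p.1 + y p.2 ≠ 0 := by have := hy2 p.1; have := hy2 p.2; positivity
    have hne3 : y p.2 - y p.1 ≠ 0 := by linarith
    have hne4 : y p.2 + y p.1 ≠ 0 := by have := hy2 p.1; have := hy2 p.2; positivity
    have hGe : G p.1 p.2 + G p.2 p.1
        = ((x p.1 - y p.1) - (x p.2 - y p.2)) / (y p.1 - y p.2)
          + ((x p.1 - y p.1) + (x p.2 - y p.2)) / (y p.1 + y p.2) := by
      rw [hG]; field_simp; ring
    linarith [hGe ▸ this]
  rw [Finset.sum_add_distrib, pair_sum G] at hA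
  -- the G-sum equals ∑ d_i (y_i/2 - ν/y_i)
  have hGsum : ∑ i, ∑ j ∈ Finset.univ.erase i, G i j
      = ∑ i, (x i - y i) * (y i / 2 - ν / y i) := by
    refine Finset.sum_congr rfl fun i _ => ?_
    rw [hG, ← Finset.mul_sum]
    have := hstat i
    have : (∑ j ∈ Finset.univ.erase i, (1 / (y i - y j) + 1 / (y i + y j)))
        = y i / 2 - ν / y i := by linarith
    rw [this]
  rw [hGsum] at hA
  -- log sum bound
  have hB : ∑ i, Real.log (x i) ≤ ∑ i, (Real.log (y i) + (x i - y i) / y i) :=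
    Finset.sum_le_sum fun i _ => loglin (x i) (y i) (hx2 i) (hy2 i)
  rw [Finset.sum_add_distrib] at hB
  -- norm bound
  have hnorm : ‖y‖ ^ 2 + ∑ i, 2 * y i * (x i - y i) ≤ ‖x‖ ^ 2 := by
    rw [normsq, normsq, ← Finset.sum_add_distrib]
    exact Finset.sum_le_sum fun i _ => by nlinarith [sq_nonneg (x i - y i)]
  -- the stationarity cancellation
  have hC : ∑ i, (2 * ((x i - y i) * (y i / 2 - ν / y i)) + 2 * ν * ((x i - y i) / y i)
        - 2 * y i * (x i - y i) / 2) = 0 := by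
    refine Finset.sum_eq_zero fun i _ => ?_
    have hyi := (hy2 i).ne'
    field_simp
    ring
  have hC' : 2 * (∑ i, (x i - y i) * (y i / 2 - ν / y i)) + 2 * ν * (∑ i, (x i - y i) / y i)
      - (∑ i, 2 * y i * (x i - y i)) / 2 = 0 := by
    rw [Finset.mul_sum, Finset.mul_sum, Finset.sum_div, ← Finset.sum_add_distrib,
      ← Finset.sum_sub_distrib]
    exact hC
  have hB2 : 2 * ν * (∑ i, Real.log (x i))
      ≤ 2 * ν * ((∑ i, Real.log (y i)) + ∑ i, (x i - y i) / y i) := by nlinarith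
  linarith [hA, hB2, hC', hnorm]

lemma forward {N : ℕ} (hN : 2 ≤ N) (ν : ℝ) (hν : 0 < ν) (y : EuclideanSpace ℝ (Fin N))
    (hy1 : ∀ i j : Fin N, i < j → y j < y i) (hy2 : ∀ i, 0 < y i)
    (hmax : ∀ x : EuclideanSpace ℝ (Fin N),
      ((∀ i j : Fin N, i < j → x j < x i) ∧ ∀ i, 0 < x i) →
      2 * (∑ p ∈ Finset.univ.filter (fun p : Fin N × Fin N => p.1 < p.2),
          Real.log (x p.1 ^ 2 - x p.2 ^ 2)) + 2 * ν * (∑ i, Real.log (x i)) - ‖x‖ ^ 2 / 2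
      ≤ 2 * (∑ p ∈ Finset.univ.filter (fun p : Fin N × Fin N => p.1 < p.2),
          Real.log (y p.1 ^ 2 - y p.2 ^ 2)) + 2 * ν * (∑ i, Real.log (y i)) - ‖y‖ ^ 2 / 2)
    (i : Fin N) :
    y i / 2 = (∑ j ∈ Finset.univ.erase i, (1 / (y i - y j) + 1 / (y i + y j))) + ν / y i := by
  classical
  set P := Finset.univ.filter (fun p : Fin N × Fin N => p.1 < p.2) with hP
  set yf : Fin N → ℝ := fun j => y j with hyf
  -- distinct coordinates
  have hne : ∀ j : Fin N, j ≠ i → yf j ≠ yf i := by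
    intro j hj
    rcases lt_or_gt_of_ne hj with h | h
    · exact (hy1 j i h).ne'
    · exact (hy1 i j h).ne
  -- the erase set is nonempty
  have hnonempty : (Finset.univ.erase i).Nonempty := by
    rw [← Finset.card_pos, Finset.card_erase_of_mem (Finset.mem_univ i), Finset.card_univ,
      Fintype.card_fin]
    omega
  set δ0 : ℝ := (Finset.univ.erase i).inf' hnonempty (fun j => |yf i - yf j|) with hδ0
  set δ : ℝ := min (yf i) δ0 with hδdef
  have hδ : 0 < δ := by
    rw [hδdef, lt_min_iff]
    constructor
    · exact hy2 i
    · rw [hδ0, Finset.lt_inf'_iff]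
      intro j hj
      have := hne j (Finset.ne_of_mem_erase hj)
      rw [abs_pos, sub_ne_zero]
      exact fun h => this h.symm
  have hδle : ∀ j : Fin N, j ≠ i → δ ≤ |yf i - yf j| := by
    intro j hj
    exact le_trans (min_le_right _ _) (Finset.inf'_le _ (Finset.mem_erase.mpr ⟨hj, Finset.mem_univ j⟩))
  set uf : ℝ → Fin N → ℝ := fun t => Function.update yf i (yf i + t) with huf
  have hufap : ∀ t j, uf t j = if j = i then yf i + t else yf j := by
    intro t j; rw [huf]; simp [Function.update_apply]
  have hu0 : uf 0 = yf := by
    funext j; rw [hufap]; split <;> simp_all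
  -- chamber membership
  have hcham : ∀ t : ℝ, |t| < δ →
      (∀ j k : Fin N, j < k → uf t k < uf t j) ∧ ∀ j, 0 < uf t j := by
    intro t ht
    have ht1 : -δ < t := (abs_lt.mp ht).1
    have ht2 : t < δ := (abs_lt.mp ht).2
    constructor
    · intro j k hjk
      rw [hufap, hufap]
      rcases eq_or_ne j i with hj | hj
      · have hk : k ≠ i := by rw [← hj]; exact ne_of_gt hjk
        rw [if_neg hk, if_pos hj]
        have hyk : yf k < yf i := by rw [← hj]; exact hy1 _ _ hjk
        have := hδle k hk
        rw [abs_of_pos (by linarith)] at this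
        linarith
      · rcases eq_or_ne k i with hk | hk
        · rw [if_pos hk, if_neg hj]
          have hyj : yf i < yf j := by rw [← hk]; exact hy1 _ _ hjk
          have := hδle j hj
          rw [abs_of_neg (by linarith)] at this
          linarith
        · rw [if_neg hj, if_neg hk]
          exact hy1 _ _ hjk
    · intro j
      rw [hufap]
      split
      · have : δ ≤ yf i := min_le_left _ _
        linarith
      · exact hy2 j
  -- derivative setup
  set e : Fin N → ℝ := fun j => if j = i then (1:ℝ) else 0 with he
  have hv : ∀ j : Fin N, HasDerivAt (fun t => uf t j) (e j) 0 := by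
    intro j
    rcases eq_or_ne j i with hj | hj
    · have hfun : (fun t => uf t j) = fun t => yf i + t := by
        funext t; rw [hufap, if_pos hj]
      rw [hfun]
      simp only [he, if_pos hj]
      simpa using (hasDerivAt_id (0:ℝ)).const_add (yf i)
    · have hfun : (fun t => uf t j) = fun _ => yf j := by
        funext t; rw [hufap, if_neg hj]
      rw [hfun]
      simp only [he, if_neg hj]
      exact hasDerivAt_const 0 (yf j)
  have hSder : HasDerivAt (fun t => ∑ p ∈ P, Real.log (uf t p.1 ^ 2 - uf t p.2 ^ 2))
      (∑ p ∈ P, (2 * yf p.1 * e p.1 - 2 * yf p.2 * e p.2) / (yf p.1 ^ 2 - yf p.2 ^ 2)) 0 := by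
    apply HasDerivAt.fun_sum
    intro p hp
    have hlt : p.1 < p.2 := (Finset.mem_filter.mp hp).2
    have hpos2 := hy2 p.2
    have hord := hy1 p.1 p.2 hlt
    have hne0 : uf 0 p.1 ^ 2 - uf 0 p.2 ^ 2 ≠ 0 := by
      rw [hu0]; show yf p.1 ^ 2 - yf p.2 ^ 2 ≠ 0; nlinarith
    have h2 := (((hv p.1).pow 2).sub ((hv p.2).pow 2)).log hne0
    refine h2.congr_deriv ?_
    simp only [Pi.sub_apply, Pi.pow_apply, hu0]
    norm_num
  have hLder : HasDerivAt (fun t => ∑ j, Real.log (uf t j)) (∑ j, e j / yf j) 0 := by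
    apply HasDerivAt.fun_sum
    intro j _
    have hne0 : uf 0 j ≠ 0 := by rw [hu0]; exact (hy2 j).ne'
    have h2 := (hv j).log hne0
    refine h2.congr_deriv ?_
    rw [hu0]
  have hQder : HasDerivAt (fun t => ∑ j, uf t j ^ 2) (∑ j, 2 * yf j * e j) 0 := by
    apply HasDerivAt.fun_sum
    intro j _
    have h2 := (hv j).pow 2
    refine h2.congr_deriv ?_
    rw [hu0]
    norm_num
  set D : ℝ := 2 * (∑ p ∈ P, (2 * yf p.1 * e p.1 - 2 * yf p.2 * e p.2) / (yf p.1 ^ 2 - yf p.2 ^ 2))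
      + 2 * ν * (∑ j, e j / yf j) - (∑ j, 2 * yf j * e j) / 2 with hD
  set f : ℝ → ℝ := fun t => 2 * (∑ p ∈ P, Real.log (uf t p.1 ^ 2 - uf t p.2 ^ 2))
      + 2 * ν * (∑ j, Real.log (uf t j)) - (∑ j, uf t j ^ 2) / 2 with hf
  have hfder : HasDerivAt f D 0 :=
    ((hSder.const_mul 2).add (hLder.const_mul (2 * ν))).sub (hQder.div_const 2)
  -- local maximality
  have key : ∀ t : ℝ, |t| < δ → f t ≤ f 0 := by
    intro t ht
    have hch := hcham t ht
    set xt : EuclideanSpace ℝ (Fin N) := (WithLp.equiv 2 (Fin N → ℝ)).symm (uf t) with hxt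
    have hxtap : ∀ j, xt j = uf t j := fun j => rfl
    have h := hmax xt ⟨fun a b hab => by rw [hxtap, hxtap]; exact hch.1 a b hab,
      fun a => by rw [hxtap]; exact hch.2 a⟩
    rw [normsq xt, normsq y] at h
    simp only [hxtap] at h
    rw [hf]
    simp only []
    rw [hu0]
    simpa only [hyf] using h
  have hloc : IsLocalMax f 0 := by
    refine Metric.eventually_nhds_iff.mpr ⟨δ, hδ, fun t ht => ?_⟩
    rw [Real.dist_eq, sub_zero] at ht
    exact key t ht
  have hD0 : D = 0 := hloc.hasDerivAt_eq_zero hfder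
  -- algebraic simplification of D
  have hpair : ∑ p ∈ P, (2 * yf p.1 * e p.1 - 2 * yf p.2 * e p.2) / (yf p.1 ^ 2 - yf p.2 ^ 2)
      = ∑ j, ∑ k ∈ Finset.univ.erase j, (2 * yf j * e j) / (yf j ^ 2 - yf k ^ 2) := by
    rw [← pair_sum (fun a b => (2 * yf a * e a) / (yf a ^ 2 - yf b ^ 2))]
    refine Finset.sum_congr rfl fun p hp => ?_
    have hlt := (Finset.mem_filter.mp hp).2
    have hord := hy1 p.1 p.2 hlt
    have h2 := hy2 p.2
    have h1 := hy2 p.1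
    have hd : yf p.1 ^ 2 - yf p.2 ^ 2 ≠ 0 := by nlinarith
    have hd' : yf p.2 ^ 2 - yf p.1 ^ 2 ≠ 0 := by nlinarith
    field_simp
    ring
  have houter : ∑ j, ∑ k ∈ Finset.univ.erase j, (2 * yf j * e j) / (yf j ^ 2 - yf k ^ 2)
      = ∑ k ∈ Finset.univ.erase i, 2 * yf i / (yf i ^ 2 - yf k ^ 2) := by
    rw [Fintype.sum_eq_single i]
    · refine Finset.sum_congr rfl fun k hk => ?_
      simp [he]
    · intro j hj
      refine Finset.sum_eq_zero fun k _ => ?_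
      simp [he, hj]
  have hterm : ∀ k ∈ Finset.univ.erase i, 2 * yf i / (yf i ^ 2 - yf k ^ 2)
      = 1 / (yf i - yf k) + 1 / (yf i + yf k) := by
    intro k hk
    have hki := hne k (Finset.ne_of_mem_erase hk)
    have h1 := hy2 i
    have h2 := hy2 k
    have ha : yf i - yf k ≠ 0 := by intro h; exact hki (by linarith)
    have hb : yf i + yf k ≠ 0 := by positivity
    have hd : yf i ^ 2 - yf k ^ 2 ≠ 0 := by
      have hfac : yf i ^ 2 - yf k ^ 2 = (yf i - yf k) * (yf i + yf k) := by ring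
      rw [hfac]
      exact mul_ne_zero ha hb
    field_simp
    ring
  have hesum : (∑ j, e j / yf j) = 1 / yf i := by
    have h1 : ∀ j, e j / yf j = if j = i then 1 / yf j else 0 := by
      intro j; simp only [he]; split <;> simp
    simp_rw [h1]
    rw [Finset.sum_ite_eq' Finset.univ i (fun j => 1 / yf j)]
    simp
  have hq : (∑ j, 2 * yf j * e j) = 2 * yf i := by
    have h1 : ∀ j, 2 * yf j * e j = if j = i then 2 * yf j else 0 := by
      intro j; simp only [he]; split <;> simp
    simp_rw [h1]
    rw [Finset.sum_ite_eq' Finset.univ i (fun j => 2 * yf j)]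
    simp
  rw [hD, hpair, houter, Finset.sum_congr rfl hterm, hesum, hq] at hD0
  show yf i / 2 = (∑ j ∈ Finset.univ.erase i, (1 / (yf i - yf j) + 1 / (yf i + yf j))) + ν / yf i
  have hyine := (hy2 i).ne'
  have hfrac : ν / yf i = ν * (1 / yf i) := by rw [mul_one_div]
  linarith [hD0]


/-- For `N ≥ 2`, `ν > 0` and `y` in the open Weyl chamber of type `B`,
the function `W(x) = 2 ∑_{i<j} ln(x_i² − x_j²) + 2ν ∑_i ln x_i − ‖x‖²/2` is maximal at
`y` (among points of the open chamber) if and only if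
`y_i/2 = ∑_{j ≠ i} (1/(y_i − y_j) + 1/(y_i + y_j)) + ν/y_i` for all `i`. -/
theorem W_max_iff_stationary_B (N : ℕ) (hN : 2 ≤ N) (ν : ℝ) (hν : 0 < ν)
    (y : EuclideanSpace ℝ (Fin N))
    (hy : (∀ i j : Fin N, i < j → y j < y i) ∧ ∀ i, 0 < y i)
    (W : EuclideanSpace ℝ (Fin N) → ℝ)
    (hW : ∀ x, W x = 2 * (∑ p ∈ Finset.univ.filter (fun p : Fin N × Fin N => p.1 < p.2),
          Real.log (x p.1 ^ 2 - x p.2 ^ 2))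
        + 2 * ν * (∑ i, Real.log (x i)) - ‖x‖ ^ 2 / 2) :
    (∀ x : EuclideanSpace ℝ (Fin N),
        ((∀ i j : Fin N, i < j → x j < x i) ∧ ∀ i, 0 < x i) → W x ≤ W y)
      ↔ (∀ i : Fin N, y i / 2
          = (∑ j ∈ Finset.univ.erase i, (1 / (y i - y j) + 1 / (y i + y j))) + ν / y i) := by
  constructor
  · intro hmax i
    refine forward hN ν hν y hy.1 hy.2 (fun x hx => ?_) i
    have h := hmax x hx
    rw [hW x, hW y] at h
    exact h
  · intro hstat x hx
    rw [hW x, hW y]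
    exact backward ν hν y x hy.1 hy.2 hx.1 hx.2 hstat
end

section
/- Let N ≥ 1, ν > 0 and let y ∈ ℝ^N with y_1 > y_2 > … > y_N > 0. Then y_i/2 = Σ_{j ≠ i} (1/(y_i − y_j) + 1/(y_i + y_j)) + ν/y_i holds for every i = 1,…,N if and only if L_N^{(ν−1)}(y_i²/2) = 0 for every i = 1,…,N (equivalently, the numbers y_1²/2 > … > y_N²/2 are exactly the N ordered zeros of the generalized Laguerre polynomial L_N^{(ν−1)}). -/
open Polynomial Finset

/-- The generalized Laguerre polynomial
`L_n^{(α)}(x) = ∑_{k=0}^n binom(n+α, n−k) · (−x)^k / k!`, where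
`binom(n+α, n−k) = ((α+k+1)(α+k+2)⋯(α+n))/(n−k)!`. -/
noncomputable def laguerre (n : ℕ) (α : ℝ) (x : ℝ) : ℝ :=
  ∑ k ∈ Finset.range (n + 1),
    ((∏ m ∈ Finset.Ico k n, (α + (m : ℝ) + 1)) / ((n - k).factorial : ℝ))
      * ((-x) ^ k / (k.factorial : ℝ))

/-- The `k`-th coefficient of the generalized Laguerre polynomial with parameter `α = ν - 1`. -/
noncomputable def lagCoeff (N : ℕ) (ν : ℝ) (k : ℕ) : ℝ :=
  (∏ m ∈ Finset.Ico k N, (ν + (m : ℝ))) / ((N - k).factorial : ℝ) * ((-1) ^ k / (k.factorial : ℝ))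

/-- The generalized Laguerre polynomial `L_N^{(ν-1)}` as a `Polynomial ℝ`. -/
noncomputable def lagPoly (N : ℕ) (ν : ℝ) : Polynomial ℝ :=
  ∑ k ∈ Finset.range (N + 1), C (lagCoeff N ν k) * X ^ k

lemma lagPoly_coeff (N : ℕ) (ν : ℝ) (k : ℕ) :
    (lagPoly N ν).coeff k = if k ≤ N then lagCoeff N ν k else 0 := by
  rw [lagPoly, finset_sum_coeff]
  simp only [coeff_C_mul, coeff_X_pow, mul_ite, mul_one, mul_zero]
  rw [Finset.sum_ite_eq (Finset.range (N + 1)) k (fun j => lagCoeff N ν j)]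
  simp [Nat.lt_succ_iff]

lemma lagPoly_coeff_gt (N : ℕ) (ν : ℝ) {k : ℕ} (hk : N < k) : (lagPoly N ν).coeff k = 0 := by
  rw [lagPoly_coeff, if_neg (by omega)]

lemma lagPoly_coeff_N (N : ℕ) (ν : ℝ) :
    (lagPoly N ν).coeff N = (-1) ^ N / (N.factorial : ℝ) := by
  rw [lagPoly_coeff, if_pos le_rfl, lagCoeff]
  simp

lemma lagPoly_eval (N : ℕ) (ν : ℝ) (x : ℝ) :
    (lagPoly N ν).eval x = laguerre N (ν - 1) x := by
  rw [lagPoly, laguerre, eval_finset_sum]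
  refine Finset.sum_congr rfl fun k _ => ?_
  have hm : ∀ m : ℕ, (ν - 1) + (m : ℝ) + 1 = ν + m := fun m => by ring
  simp only [hm, eval_mul, eval_C, eval_pow, eval_X, lagCoeff]
  rw [neg_pow]
  ring

/-- The Laguerre differential operator `p ↦ x p'' + (ν - x) p' + N p`. -/
noncomputable def odeOp (N : ℕ) (ν : ℝ) (p : Polynomial ℝ) : Polynomial ℝ :=
  X * derivative (derivative p) + (C ν - X) * derivative p + C (N : ℝ) * p

lemma odeOp_coeff (N : ℕ) (ν : ℝ) (p : Polynomial ℝ) (k : ℕ) :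
    (odeOp N ν p).coeff k
      = ((k : ℝ) + 1) * ((k : ℝ) + ν) * p.coeff (k + 1) + ((N : ℝ) - k) * p.coeff k := by
  rcases k with _ | n
  · simp only [odeOp, coeff_add, mul_coeff_zero, coeff_X_zero, zero_mul, coeff_sub,
      sub_mul, coeff_C_mul, coeff_derivative, Nat.cast_zero, coeff_C_zero]
    ring
  · simp only [odeOp, coeff_add, coeff_X_mul, sub_mul, coeff_sub, coeff_C_mul,
      coeff_derivative]
    push_cast
    ring

/-- The coefficient recurrence characterizing solutions of the Laguerre ODE. -/
def LagRel (N : ℕ) (ν : ℝ) (p : Polynomial ℝ) : Prop :=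
  ∀ k : ℕ, ((k : ℝ) + 1) * ((k : ℝ) + ν) * p.coeff (k + 1) = ((k : ℝ) - (N : ℝ)) * p.coeff k

lemma lagRel_iff_odeOp_eq_zero (N : ℕ) (ν : ℝ) (p : Polynomial ℝ) :
    LagRel N ν p ↔ odeOp N ν p = 0 := by
  constructor
  · intro h
    ext k
    rw [odeOp_coeff, h k, coeff_zero]
    ring
  · intro h k
    have h0 : (odeOp N ν p).coeff k = 0 := by rw [h, coeff_zero]
    rw [odeOp_coeff] at h0
    linarith

lemma lagRel_lagPoly (N : ℕ) (ν : ℝ) : LagRel N ν (lagPoly N ν) := by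
  intro k
  rcases lt_or_ge k N with hk | hk
  · rw [lagPoly_coeff, lagPoly_coeff, if_pos hk.le, if_pos (by omega)]
    have hprod : (∏ m ∈ Finset.Ico k N, (ν + (m : ℝ)))
        = (ν + k) * ∏ m ∈ Finset.Ico (k + 1) N, (ν + (m : ℝ)) :=
      Finset.prod_eq_prod_Ico_succ_bot hk _
    have hfac : ((N - k).factorial : ℝ) = ((N - k : ℕ) : ℝ) * ((N - (k + 1)).factorial : ℝ) := by
      have h : N - k = (N - (k + 1)) + 1 := by omega
      rw [h, Nat.factorial_succ]
      push_cast
      ring_nf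
    have hNk : ((k : ℝ) - N) = -(((N - k : ℕ)) : ℝ) := by
      have h : ((N - k : ℕ) : ℝ) = (N : ℝ) - k := by
        push_cast [Nat.cast_sub hk.le]; ring
      rw [h]; ring
    rw [lagCoeff, lagCoeff, hprod, hfac, hNk, Nat.factorial_succ]
    have h1 : ((N - (k + 1)).factorial : ℝ) ≠ 0 := Nat.cast_ne_zero.2 (Nat.factorial_ne_zero _)
    have h2 : ((k.factorial : ℝ)) ≠ 0 := Nat.cast_ne_zero.2 (Nat.factorial_ne_zero _)
    have h3 : ((N - k : ℕ) : ℝ) ≠ 0 := by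
      have : 0 < N - k := by omega
      positivity
    have h4 : ((k : ℝ) + 1) ≠ 0 := by positivity
    field_simp
    push_cast
    ring
  · rw [lagPoly_coeff, lagPoly_coeff, if_neg (by omega)]
    rcases eq_or_lt_of_le hk with h | h
    · rw [if_pos (by omega), mul_zero, ← h, sub_self, zero_mul]
    · rw [if_neg (by omega), mul_zero, mul_zero]

lemma lagRel_C_mul {N : ℕ} {ν : ℝ} {p : Polynomial ℝ} (h : LagRel N ν p) (c : ℝ) :
    LagRel N ν (C c * p) := by
  intro k
  simp only [coeff_C_mul]
  rw [mul_left_comm, mul_left_comm ((k:ℝ) - (N:ℝ)), h k]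

lemma lagRel_unique {N : ℕ} {ν : ℝ} {u v : Polynomial ℝ}
    (hu : LagRel N ν u) (hv : LagRel N ν v)
    (hu' : ∀ k, N < k → u.coeff k = 0) (hv' : ∀ k, N < k → v.coeff k = 0)
    (hN : u.coeff N = v.coeff N) : u = v := by
  have key : ∀ d : ℕ, u.coeff (N - d) = v.coeff (N - d) := by
    intro d
    induction d with
    | zero => simpa using hN
    | succ d ih =>
      rcases lt_or_ge d N with hd | hd
      · set k := N - (d + 1) with hkdef
        have hk1 : k + 1 = N - d := by omega
        have hkN : k < N := by omega
        have hne : ((k : ℝ) - (N : ℝ)) ≠ 0 := by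
          have : (k : ℝ) < N := by exact_mod_cast hkN
          intro h; nlinarith
        have h1 := hu k
        have h2 := hv k
        rw [hk1] at h1 h2
        rw [ih] at h1
        exact mul_left_cancel₀ hne (h1.symm.trans h2)
      · have h1 : N - (d + 1) = N - d := by omega
        rw [h1, ih]
  ext k
  rcases le_or_gt k N with hk | hk
  · have h : k = N - (N - k) := by omega
    rw [h]; exact key _
  · rw [hu' k hk, hv' k hk]

lemma deriv_prod_eval {ι : Type*} [DecidableEq ι] (s : Finset ι) (f : ι → ℝ) (a : ℝ) :
    (Polynomial.derivative (∏ j ∈ s, (X - C (f j)))).eval a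
      = ∑ j ∈ s, ∏ k ∈ s.erase j, (a - f k) := by
  induction s using Finset.induction_on with
  | empty => simp
  | insert i s hi ih =>
    rw [Finset.prod_insert hi, derivative_mul, derivative_X_sub_C, one_mul,
      eval_add, eval_mul, eval_sub, eval_X, eval_C, ih, Finset.sum_insert hi,
      Finset.erase_insert hi, eval_prod]
    simp only [eval_sub, eval_X, eval_C]
    rw [Finset.mul_sum]
    congr 1
    refine Finset.sum_congr rfl fun j hj => ?_
    rw [Finset.erase_insert_of_ne (by rintro rfl; exact hi hj),
      Finset.prod_insert (fun h => hi (Finset.mem_of_mem_erase h))]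

/-- For `N ≥ 1`, `ν > 0` and `y_1 > ⋯ > y_N > 0`, the stationarity
equations `y_i/2 = ∑_{j ≠ i} (1/(y_i − y_j) + 1/(y_i + y_j)) + ν/y_i` (for all `i`)
hold if and only if `L_N^{(ν−1)}(y_i²/2) = 0` for every `i`. -/
theorem stationary_iff_laguerre_zeros_B (N : ℕ) (hN : 1 ≤ N) (ν : ℝ) (hν : 0 < ν)
    (y : Fin N → ℝ)
    (hy : (∀ i j : Fin N, i < j → y j < y i) ∧ ∀ i, 0 < y i) :
    (∀ i : Fin N, y i / 2
        = (∑ j ∈ Finset.univ.erase i, (1 / (y i - y j) + 1 / (y i + y j))) + ν / y i)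
      ↔ (∀ i : Fin N, laguerre N (ν - 1) (y i ^ 2 / 2) = 0) := by
  classical
  obtain ⟨hmono, hpos⟩ := hy
  set x : Fin N → ℝ := fun i => y i ^ 2 / 2 with hxdef
  have hyne : ∀ i j : Fin N, i ≠ j → y i ≠ y j := by
    intro i j hij
    rcases lt_or_gt_of_ne hij with h | h
    · exact (hmono i j h).ne'
    · exact (hmono j i h).ne
  have hxne : ∀ i j : Fin N, i ≠ j → x i ≠ x j := by
    intro i j hij h
    apply hyne i j hij
    have h2 : y i ^ 2 = y j ^ 2 := by
      have := h
      simp only [hxdef] at this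
      linarith
    nlinarith [hpos i, hpos j]
  have hxinj : Function.Injective x := by
    intro i j h
    by_contra hij
    exact hxne i j hij h
  set p : Polynomial ℝ := ∏ i : Fin N, (X - C (x i)) with hpdef
  have hpmonic : p.Monic := monic_prod_of_monic _ _ fun i _ => monic_X_sub_C (x i)
  have hpdeg : p.natDegree = N := by
    rw [hpdef, natDegree_prod _ _ (fun i _ => X_sub_C_ne_zero (x i))]
    simp [natDegree_X_sub_C]
  have hpN : p.coeff N = 1 := by
    have h := hpmonic.coeff_natDegree
    rwa [hpdeg] at h
  have hpgt : ∀ k, N < k → p.coeff k = 0 := fun k hk =>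
    coeff_eq_zero_of_natDegree_lt (hpdeg ▸ hk)
  have hproot : ∀ i, p.eval (x i) = 0 := by
    intro i
    rw [hpdef, eval_prod]
    exact Finset.prod_eq_zero (Finset.mem_univ i) (by simp)
  set S : Fin N → ℝ := fun i => ∑ j ∈ Finset.univ.erase i, 1 / (x i - x j) with hSdef
  -- the product over the other roots
  set R : Fin N → ℝ := fun i => ∏ j ∈ Finset.univ.erase i, (x i - x j) with hRdef
  have hRne : ∀ i, R i ≠ 0 := by
    intro i
    refine Finset.prod_ne_zero_iff.2 fun j hj => ?_
    exact sub_ne_zero.2 (hxne i j (fun h => (Finset.mem_erase.1 hj).1 h.symm) )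
  -- evaluation of the ODE operator at the roots
  have hode_eval : ∀ i, (odeOp N ν p).eval (x i) = R i * (2 * x i * S i + ν - x i) := by
    intro i
    set r : Polynomial ℝ := ∏ j ∈ Finset.univ.erase i, (X - C (x j)) with hrdef
    have hfact : p = (X - C (x i)) * r := by
      rw [hpdef, hrdef, ← Finset.mul_prod_erase Finset.univ _ (Finset.mem_univ i)]
    have hrv : r.eval (x i) = R i := by rw [hrdef, eval_prod]; simp [hRdef]
    have hp' : derivative p = r + (X - C (x i)) * derivative r := by
      rw [hfact, derivative_mul, derivative_X_sub_C, one_mul]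
    have hp'eval : (derivative p).eval (x i) = R i := by
      rw [hp']; simp [hrv]
    have hr'eval : (derivative r).eval (x i) = S i * R i := by
      rw [hrdef, deriv_prod_eval]
      rw [hSdef, Finset.sum_mul]
      refine Finset.sum_congr rfl fun j hj => ?_
      have hji : x i - x j ≠ 0 :=
        sub_ne_zero.2 (hxne i j (fun h => (Finset.mem_erase.1 hj).1 h.symm))
      have hsplit : R i = (x i - x j) * ∏ k ∈ (Finset.univ.erase i).erase j, (x i - x k) := by
        simp only [hRdef]
        exact (Finset.mul_prod_erase (Finset.univ.erase i) _ hj).symm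
      rw [hsplit]
      field_simp
    have hp''eval : (derivative (derivative p)).eval (x i) = 2 * (S i * R i) := by
      rw [hp', derivative_add, derivative_mul, derivative_X_sub_C, one_mul]
      simp [hr'eval]
      ring
    rw [odeOp]
    simp only [eval_add, eval_mul, eval_sub, eval_X, eval_C, hp'eval, hp''eval, hproot i]
    ring
  -- the stationarity equation for index i is equivalent to `2 x_i S_i + ν - x_i = 0`
  have hstat_iff : ∀ i : Fin N,
      (y i / 2 = (∑ j ∈ Finset.univ.erase i, (1 / (y i - y j) + 1 / (y i + y j))) + ν / y i)
        ↔ 2 * x i * S i + ν - x i = 0 := by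
    intro i
    have hyi : y i ≠ 0 := (hpos i).ne'
    have hsum : (∑ j ∈ Finset.univ.erase i, (1 / (y i - y j) + 1 / (y i + y j)))
        = y i * S i := by
      rw [hSdef, Finset.mul_sum]
      refine Finset.sum_congr rfl fun j hj => ?_
      have hij : i ≠ j := fun h => (Finset.mem_erase.1 hj).1 h.symm
      have h1 : y i - y j ≠ 0 := sub_ne_zero.2 (hyne i j hij)
      have h2 : y i + y j ≠ 0 := (add_pos (hpos i) (hpos j)).ne'
      have h3 : x i - x j ≠ 0 := sub_ne_zero.2 (hxne i j hij)
      have hxx : x i - x j = (y i - y j) * (y i + y j) / 2 := by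
        simp only [hxdef]; ring
      rw [hxx] at h3 ⊢
      field_simp
      ring
    rw [hsum]
    have h3 : y i * (ν / y i) = ν := by field_simp
    constructor
    · intro h
      have h2 : y i * (y i / 2) = y i * (y i * S i + ν / y i) := by rw [← h]
      rw [mul_add, h3] at h2
      simp only [hxdef]
      linear_combination -h2
    · intro h
      simp only [hxdef] at h
      have h2 : y i * (y i / 2) = y i * (y i * S i + ν / y i) := by
        rw [mul_add, h3]
        linear_combination -h
      exact mul_left_cancel₀ hyi h2
  -- a polynomial vanishing at all x i with coefficients ≥ N zero is zero
  have hzero : ∀ q : Polynomial ℝ, (∀ k, N ≤ k → q.coeff k = 0) →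
      (∀ i, q.eval (x i) = 0) → q = 0 := by
    intro q hcoeff heval
    by_cases h0 : q = 0
    · exact h0
    · refine Polynomial.eq_zero_of_natDegree_lt_card_of_eval_eq_zero q hxinj heval ?_
      rw [Fintype.card_fin]
      rw [Polynomial.natDegree_lt_iff_degree_lt h0]
      rw [Polynomial.degree_lt_iff_coeff_zero]
      intro m hm
      exact hcoeff m (by exact_mod_cast hm)
  -- the rescaled Laguerre polynomial
  set c : ℝ := (-1) ^ N * (N.factorial : ℝ) with hcdef
  have hcne : c ≠ 0 := by
    rw [hcdef]
    exact mul_ne_zero (pow_ne_zero _ (by norm_num))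
      (Nat.cast_ne_zero.2 (Nat.factorial_ne_zero _))
  set L : Polynomial ℝ := C c * lagPoly N ν with hLdef
  have hLrel : LagRel N ν L := lagRel_C_mul (lagRel_lagPoly N ν) c
  have hLgt : ∀ k, N < k → L.coeff k = 0 := by
    intro k hk
    rw [hLdef, coeff_C_mul, lagPoly_coeff_gt N ν hk, mul_zero]
  have hLN : L.coeff N = 1 := by
    rw [hLdef, coeff_C_mul, lagPoly_coeff_N, hcdef]
    have h1 : (N.factorial : ℝ) ≠ 0 := Nat.cast_ne_zero.2 (Nat.factorial_ne_zero _)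
    have h2 : ((-1 : ℝ)) ^ N * (-1 : ℝ) ^ N = 1 := by
      rw [← mul_pow]; norm_num
    field_simp
    linear_combination h2
  -- key equivalence
  have hmain : (∀ i, 2 * x i * S i + ν - x i = 0) ↔ (∀ i, (lagPoly N ν).eval (x i) = 0) := by
    constructor
    · intro h
      have hodezero : odeOp N ν p = 0 := by
        apply hzero
        · intro k hk
          rw [odeOp_coeff]
          rcases eq_or_lt_of_le hk with h' | h'
          · rw [hpgt (k + 1) (by omega), mul_zero, ← h', sub_self, zero_mul, zero_add]
          · rw [hpgt (k + 1) (by omega), hpgt k h', mul_zero, mul_zero, add_zero]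
        · intro i
          rw [hode_eval i, h i, mul_zero]
      have hprel : LagRel N ν p := (lagRel_iff_odeOp_eq_zero N ν p).2 hodezero
      have hpL : p = L := lagRel_unique hprel hLrel hpgt hLgt (hpN.trans hLN.symm)
      intro i
      have h0 : L.eval (x i) = 0 := by rw [← hpL]; exact hproot i
      rw [hLdef, eval_mul, eval_C] at h0
      exact (mul_eq_zero.1 h0).resolve_left hcne
    · intro h
      have hLroot : ∀ i, L.eval (x i) = 0 := by
        intro i
        rw [hLdef, eval_mul, eval_C, h i, mul_zero]
      have hpL : p = L := by
        have hD : p - L = 0 := by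
          apply hzero
          · intro k hk
            rcases eq_or_lt_of_le hk with h' | h'
            · rw [coeff_sub, ← h', hpN, hLN, sub_self]
            · rw [coeff_sub, hpgt k h', hLgt k h', sub_self]
          · intro i
            rw [eval_sub, hproot i, hLroot i, sub_self]
        exact sub_eq_zero.1 hD
      have hprel : LagRel N ν p := by rw [hpL]; exact hLrel
      have hodezero : odeOp N ν p = 0 := (lagRel_iff_odeOp_eq_zero N ν p).1 hprel
      intro i
      have h0 : (odeOp N ν p).eval (x i) = 0 := by rw [hodezero, eval_zero]
      rw [hode_eval i] at h0
      exact (mul_eq_zero.1 h0).resolve_left (hRne i)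
  constructor
  · intro h i
    rw [← lagPoly_eval]
    exact (hmain.1 (fun j => (hstat_iff j).1 (h j))) i
  · intro h i
    refine (hstat_iff i).2 ?_
    have := hmain.2 (fun j => by rw [lagPoly_eval]; exact h j)
    exact this i
end

section
/- Let N ≥ 1 and ε > 0, and set U_ε := {x ∈ C_N^B : dist(x, ∂C_N^B) > ε}. Then: (a) the map H(x) := (1/x_1, …, 1/x_N) is Lipschitz continuous on U_ε with Lipschitz constant ε^{−2}, i.e. ‖H(x) − H(y)‖ ≤ ε^{−2}·‖x − y‖ for all x, y ∈ U_ε; (b) for every starting point x_0 ∈ U_ε, the curve φ(t, x_0) := (√(2t + x_{0,1}²), …, √(2t + x_{0,N}²)) satisfies φ(0,x_0) = x_0, solves d/dt φ(t,x_0) = H(φ(t,x_0)) for all t ≥ 0, and φ(t, x_0) lies in the interior of C_N^B for all t ≥ 0. -/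
section aux
variable {N : ℕ}

private def Cset (N : ℕ) : Set (EuclideanSpace ℝ (Fin N)) :=
  {x | (∀ i j : Fin N, i < j → x j ≤ x i) ∧ ∀ i, 0 ≤ x i}

private lemma not_interior_of_perturb (x : EuclideanSpace ℝ (Fin N)) (i : Fin N)
    (h : ∀ δ : ℝ, 0 < δ → (x - EuclideanSpace.single i δ) ∉ Cset N) :
    x ∉ interior (Cset N) := by
  intro hmem
  rw [mem_interior_iff_mem_nhds, Metric.mem_nhds_iff] at hmem
  obtain ⟨r, hr, hball⟩ := hmem
  refine h (r/2) (by positivity) (hball ?_)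
  have : dist (x - EuclideanSpace.single i (r/2)) x = |r| / 2 := by
    rw [dist_eq_norm]
    simp [EuclideanSpace.norm_single]
  rw [Metric.mem_ball, this, abs_of_pos hr]
  linarith

/-- key: points deep in the cone have coordinates > ε and strict gaps -/
private lemma coords_of_deep (hN : 1 ≤ N) {ε : ℝ} (hε : 0 < ε)
    (x : EuclideanSpace ℝ (Fin N)) (hxC : x ∈ Cset N)
    (hxd : ε < Metric.infDist x (frontier (Cset N))) :
    (∀ i, ε < x i) ∧ (∀ i j : Fin N, i < j → x j < x i) := by
  obtain ⟨hmono, hpos⟩ := hxC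
  have hstrict : ∀ i j : Fin N, i < j → x j < x i := by
    intro i j hij
    rcases lt_or_ge (x j) (x i) with h | h
    · exact h
    · exfalso
      have heq : x i = x j := le_antisymm h (hmono i j hij)
      have hfr : x ∈ frontier (Cset N) := by
        constructor
        · exact subset_closure ⟨hmono, hpos⟩
        · refine not_interior_of_perturb x i ?_
          intro δ hδ hmem
          have h1 := hmem.1 i j hij
          have h2 : (x - EuclideanSpace.single i δ) i = x i - δ := by
            simp [EuclideanSpace.single_apply]
          have h3 : (x - EuclideanSpace.single i δ) j = x j := by
            have : (i : Fin N) ≠ j := ne_of_lt hij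
            simp [EuclideanSpace.single_apply, (this.symm)]
          rw [h2, h3, heq] at h1
          linarith
      have := Metric.infDist_zero_of_mem hfr
      rw [this] at hxd
      linarith
  refine ⟨?_, hstrict⟩
  -- the point with last coordinate zeroed is on the frontier
  have hNpos : 0 < N := hN
  set last : Fin N := ⟨N - 1, by omega⟩ with hlast
  have hle : ∀ i : Fin N, x last ≤ x i := by
    intro i
    rcases eq_or_lt_of_le (show i ≤ last by
      apply Fin.le_def.mpr; simp [hlast]; omega) with h | h
    · rw [h]
    · exact le_of_lt (hstrict i last h)
  set z : EuclideanSpace ℝ (Fin N) := x - EuclideanSpace.single last (x last) with hz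
  have hzlast : z last = 0 := by simp [hz, EuclideanSpace.single_apply]
  have hzother : ∀ i : Fin N, i ≠ last → z i = x i := by
    intro i hi
    simp [hz, EuclideanSpace.single_apply, hi]
  have hzC : z ∈ Cset N := by
    constructor
    · intro i j hij
      rcases eq_or_ne j last with hj | hj
      · rw [hj, hzlast]
        have hi : i ≠ last := by rw [← hj]; exact ne_of_lt hij
        rw [hzother i hi]
        exact hpos i
      · have hi : i ≠ last := by
          intro h
          have := lt_of_lt_of_le hij (Fin.le_def.mpr (show (j:ℕ) ≤ (last:ℕ) by simp [hlast]; omega))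
          rw [h] at this; exact lt_irrefl _ this
        rw [hzother i hi, hzother j hj]
        exact hmono i j hij
    · intro i
      rcases eq_or_ne i last with hi | hi
      · rw [hi, hzlast]
      · rw [hzother i hi]; exact hpos i
  have hzfr : z ∈ frontier (Cset N) := by
    constructor
    · exact subset_closure hzC
    · refine not_interior_of_perturb z last ?_
      intro δ hδ hmem
      have := hmem.2 last
      have h2 : (z - EuclideanSpace.single last δ) last = z last - δ := by
        simp [EuclideanSpace.single_apply]
      rw [h2, hzlast] at this
      linarith
  have hdist : dist x z = x last := by
    rw [dist_eq_norm]
    have : x - z = EuclideanSpace.single last (x last) := by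
      simp [hz]
    rw [this, EuclideanSpace.norm_single, Real.norm_eq_abs, abs_of_nonneg (hpos last)]
  have hεlast : ε < x last := by
    calc ε < Metric.infDist x (frontier (Cset N)) := hxd
    _ ≤ dist x z := Metric.infDist_le_dist_of_mem hzfr
    _ = x last := hdist
  intro i
  exact lt_of_lt_of_le hεlast (hle i)

end aux

/-- For `N ≥ 1`, `ε > 0` and
`U_ε = {x ∈ C_N^B : dist(x, ∂C_N^B) > ε}`:
(a) the map `H(x) = (1/x_1, …, 1/x_N)` is Lipschitz on `U_ε` with constant `ε⁻²`;
(b) for every `x₀ ∈ U_ε` the curve `φ(t,x₀) = (√(2t + x₀ᵢ²))ᵢ` starts at `x₀`, solves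
`φ' = H(φ)` for `t ≥ 0`, and lies in the interior `{x : x_1 > ⋯ > x_N > 0}` of `C_N^B`
for all `t ≥ 0`. -/
theorem lipschitz_and_explicit_solution_B2 (N : ℕ) (hN : 1 ≤ N) (ε : ℝ) (hε : 0 < ε)
    (C U : Set (EuclideanSpace ℝ (Fin N)))
    (hC : C = {x | (∀ i j : Fin N, i < j → x j ≤ x i) ∧ ∀ i, 0 ≤ x i})
    (hU : U = {x ∈ C | ε < Metric.infDist x (frontier C)})
    (H : EuclideanSpace ℝ (Fin N) → EuclideanSpace ℝ (Fin N))
    (hH : ∀ x, ∀ i : Fin N, H x i = 1 / x i) :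
    (∀ x ∈ U, ∀ y ∈ U, ‖H x - H y‖ ≤ (ε ^ 2)⁻¹ * ‖x - y‖)
      ∧ ∀ x₀ ∈ U, ∀ φ : ℝ → EuclideanSpace ℝ (Fin N),
          (∀ t, ∀ i : Fin N, φ t i = Real.sqrt (2 * t + x₀ i ^ 2)) →
          (φ 0 = x₀
            ∧ (∀ t ≥ (0:ℝ), HasDerivAt φ (H (φ t)) t)
            ∧ (∀ t ≥ (0:ℝ), (∀ i j : Fin N, i < j → φ t j < φ t i) ∧ ∀ i, 0 < φ t i)) := by
  have hCset : C = Cset N := hC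
  have hkey : ∀ x ∈ U, (∀ i, ε < x i) ∧ (∀ i j : Fin N, i < j → x j < x i) := by
    intro x hx
    rw [hU, hCset] at hx
    exact coords_of_deep hN hε x hx.1 hx.2
  constructor
  · -- part (a)
    intro x hx y hy
    obtain ⟨hxε, -⟩ := hkey x hx
    obtain ⟨hyε, -⟩ := hkey y hy
    have hcoord : ∀ i : Fin N, |(H x - H y) i| ≤ (ε^2)⁻¹ * |(x - y) i| := by
      intro i
      have hxi : ε < x i := hxε i
      have hyi : ε < y i := hyε i
      have hxi0 : (0:ℝ) < x i := lt_trans hε hxi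
      have hyi0 : (0:ℝ) < y i := lt_trans hε hyi
      have h1 : (H x - H y) i = 1 / x i - 1 / y i := by
        simp [hH]
      have h2 : (x - y) i = x i - y i := by simp
      rw [h1, h2]
      have h3 : |1 / x i - 1 / y i| = |x i - y i| / (x i * y i) := by
        rw [show 1 / x i - 1 / y i = (y i - x i) / (x i * y i) by field_simp,
          abs_div, abs_sub_comm, abs_of_pos (mul_pos hxi0 hyi0)]
      rw [h3, div_le_iff₀ (mul_pos hxi0 hyi0)]
      have h5 : ε^2 ≤ x i * y i := by nlinarith
      calc |x i - y i| = |x i - y i| * ((ε^2)⁻¹ * ε^2) := by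
            rw [inv_mul_cancel₀ (by positivity : (ε:ℝ)^2 ≠ 0), mul_one]
        _ ≤ |x i - y i| * ((ε^2)⁻¹ * (x i * y i)) := by
            apply mul_le_mul_of_nonneg_left _ (abs_nonneg _)
            exact mul_le_mul_of_nonneg_left h5 (by positivity)
        _ = (ε^2)⁻¹ * |x i - y i| * (x i * y i) := by ring
    rw [EuclideanSpace.norm_eq, EuclideanSpace.norm_eq]
    have hrw : (ε^2)⁻¹ * Real.sqrt (∑ i, ‖(x - y) i‖^2)
        = Real.sqrt (∑ i, ((ε^2)⁻¹ * ‖(x-y) i‖)^2) := by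
      rw [show ∑ i : Fin N, ((ε^2)⁻¹ * ‖(x-y) i‖)^2 = ((ε^2)⁻¹)^2 * ∑ i, ‖(x-y) i‖^2 by
        rw [Finset.mul_sum]; congr 1; ext i; ring]
      rw [Real.sqrt_mul (by positivity), Real.sqrt_sq (by positivity)]
    rw [hrw]
    apply Real.sqrt_le_sqrt
    apply Finset.sum_le_sum
    intro i _
    have := hcoord i
    rw [Real.norm_eq_abs, Real.norm_eq_abs]
    nlinarith [abs_nonneg ((H x - H y) i), abs_nonneg ((x - y) i)]
  · -- part (b)
    intro x₀ hx₀ φ hφ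
    obtain ⟨hx₀ε, hx₀strict⟩ := hkey x₀ hx₀
    have hx₀pos : ∀ i, (0:ℝ) < x₀ i := fun i => lt_trans hε (hx₀ε i)
    have harg : ∀ t ≥ (0:ℝ), ∀ i : Fin N, (0:ℝ) < 2 * t + x₀ i ^ 2 := by
      intro t ht i
      have := hx₀pos i
      nlinarith
    refine ⟨?_, ?_, ?_⟩
    · ext i
      rw [hφ 0 i]
      rw [show 2 * (0:ℝ) + x₀ i ^ 2 = (x₀ i)^2 by ring]
      exact Real.sqrt_sq (le_of_lt (hx₀pos i))
    · intro t ht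
      have hφeq : φ = fun s => (PiLp.continuousLinearEquiv 2 ℝ (fun _ : Fin N => ℝ)).symm
          (fun i => Real.sqrt (2 * s + x₀ i ^ 2)) := by
        funext s
        ext i
        rw [hφ s i]
        rfl
      have hvec : H (φ t) = (PiLp.continuousLinearEquiv 2 ℝ (fun _ : Fin N => ℝ)).symm
          (fun i => 1 / Real.sqrt (2 * t + x₀ i ^ 2)) := by
        ext i
        rw [hH, hφ t i]
        rfl
      have hd : HasDerivAt (fun s : ℝ => fun i : Fin N => Real.sqrt (2 * s + x₀ i ^ 2))
          (fun i : Fin N => 1 / Real.sqrt (2 * t + x₀ i ^ 2)) t := by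
        rw [hasDerivAt_pi]
        intro i
        have hpos := harg t ht i
        have hinner : HasDerivAt (fun s : ℝ => 2 * s + x₀ i ^ 2) 2 t := by
          simpa using ((hasDerivAt_id t).const_mul (2:ℝ)).add_const (x₀ i ^ 2)
        have hsqrt := (Real.hasDerivAt_sqrt (ne_of_gt hpos)).comp t hinner
        have heq : 1 / (2 * Real.sqrt (2 * t + x₀ i ^ 2)) * 2
            = 1 / Real.sqrt (2 * t + x₀ i ^ 2) := by
          have : Real.sqrt (2 * t + x₀ i ^ 2) ≠ 0 := by positivity
          field_simp
        rw [heq] at hsqrt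
        exact hsqrt
      rw [hvec, hφeq]
      exact ((PiLp.continuousLinearEquiv 2 ℝ (fun _ : Fin N => ℝ)).symm
        |>.toContinuousLinearMap.hasFDerivAt.comp_hasDerivAt t hd)
    · intro t ht
      constructor
      · intro i j hij
        rw [hφ t i, hφ t j]
        apply Real.sqrt_lt_sqrt (le_of_lt (harg t ht j))
        have h1 : x₀ j < x₀ i := hx₀strict i j hij
        have h2 := hx₀pos j
        nlinarith
      · intro i
        rw [hφ t i]
        exact Real.sqrt_pos.mpr (harg t ht i)
end

section
/- Let N ≥ 2 and define W_D(x) := 2 Σ_{1 ≤ i < j ≤ N} ln(x_i² − x_j²) − ‖x‖²/2 on the interior {x ∈ ℝ^N : x_1 > … > x_{N−1} > |x_N|} of the Weyl chamber C_N^D. Then W_D attains a global maximum on this interior: there exists y with y_1 > … > y_{N−1} > |y_N| such that W_D(x) ≤ W_D(y) for all x with x_1 > … > x_{N−1} > |x_N|. -/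
open Finset Filter Real

private lemma WD_aux_loglin (a B : ℝ) (ha : 0 ≤ a) :
    ∃ T : ℝ, ∀ t ≥ T, a * Real.log t - t/2 < B := by
  have hc : (0:ℝ) < 1/(4*(a+1)) := by positivity
  have h := Real.isLittleO_log_id_atTop.bound hc
  obtain ⟨T, hT⟩ := eventually_atTop.mp ((h.and (eventually_ge_atTop (4*(|B|+1)))).and
    (eventually_ge_atTop 0))
  refine ⟨T, fun t ht => ?_⟩
  obtain ⟨⟨h1, h2⟩, h3⟩ := hT t ht
  rw [Real.norm_eq_abs, id, Real.norm_eq_abs] at h1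
  have hlog : Real.log t ≤ t/(4*(a+1)) := by
    calc Real.log t ≤ |Real.log t| := le_abs_self _
      _ ≤ 1/(4*(a+1)) * |t| := h1
      _ = t/(4*(a+1)) := by rw [abs_of_nonneg h3]; ring
  have haa : a * Real.log t ≤ t/4 := by
    have h4 : a * Real.log t ≤ a * (t/(4*(a+1))) := by
      rcases eq_or_lt_of_le ha with h|h
      · simp [← h]
      · exact mul_le_mul_of_nonneg_left hlog ha
    have : a * (t/(4*(a+1))) ≤ t/4 := by
      rw [show a * (t/(4*(a+1))) = a*t/(4*(a+1)) by ring,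
        div_le_div_iff₀ (by positivity) (by norm_num)]
      nlinarith
    linarith
  have hBB : -|B| ≤ B := neg_abs_le B
  linarith

set_option maxHeartbeats 1000000 in
/-- For `N ≥ 2`, the function
`W_D(x) = 2 ∑_{i<j} ln(x_i² − x_j²) − ‖x‖²/2` attains a global maximum on the interior
`{x : x_1 > ⋯ > x_{N−1} > |x_N|}` of the Weyl chamber of type `D`. -/
theorem WD_attains_max (N : ℕ) (hN : 2 ≤ N)
    (W : EuclideanSpace ℝ (Fin N) → ℝ)
    (hW : ∀ x, W x = 2 * (∑ p ∈ Finset.univ.filter (fun p : Fin N × Fin N => p.1 < p.2),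
        Real.log (x p.1 ^ 2 - x p.2 ^ 2)) - ‖x‖ ^ 2 / 2) :
    ∃ y : EuclideanSpace ℝ (Fin N),
      ((∀ i j : Fin N, i < j → j.val + 1 < N → y j < y i)
          ∧ |y ⟨N - 1, by omega⟩| < y ⟨N - 2, by omega⟩)
        ∧ ∀ x : EuclideanSpace ℝ (Fin N),
            ((∀ i j : Fin N, i < j → j.val + 1 < N → x j < x i)
              ∧ |x ⟨N - 1, by omega⟩| < x ⟨N - 2, by omega⟩) → W x ≤ W y := by
  classical
  set k1 : Fin N := ⟨N - 1, by omega⟩ with hk1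
  set k2 : Fin N := ⟨N - 2, by omega⟩ with hk2
  set P : Finset (Fin N × Fin N) := Finset.univ.filter (fun p : Fin N × Fin N => p.1 < p.2)
    with hP
  -- the chamber as a predicate
  set S : Set (EuclideanSpace ℝ (Fin N)) :=
    {x | (∀ i j : Fin N, i < j → j.val + 1 < N → x j < x i) ∧ |x k1| < x k2} with hS
  -- norm squared as a sum of squares
  have hnormsq : ∀ x : EuclideanSpace ℝ (Fin N), ‖x‖^2 = ∑ i, x i ^ 2 := by
    intro x
    rw [EuclideanSpace.norm_eq, Real.sq_sqrt (by positivity)]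
    simp [Real.norm_eq_abs, sq_abs]
  have hargle : ∀ (x : EuclideanSpace ℝ (Fin N)) (p : Fin N × Fin N),
      x p.1 ^ 2 - x p.2 ^ 2 ≤ ‖x‖^2 := by
    intro x p
    have h1 : x p.1 ^ 2 ≤ ∑ i, x i ^ 2 :=
      Finset.single_le_sum (f := fun i => x i ^ 2) (fun i _ => sq_nonneg _) (mem_univ _)
    have h2 : 0 ≤ x p.2 ^ 2 := sq_nonneg _
    rw [hnormsq]; linarith
  -- positivity of all arguments on S
  have hpos : ∀ x ∈ S, ∀ p ∈ P, 0 < x p.1 ^ 2 - x p.2 ^ 2 := by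
    intro x hx p hp
    obtain ⟨hord, habs⟩ := hx
    have hlt : p.1 < p.2 := (Finset.mem_filter.mp hp).2
    have hltv : p.1.val < p.2.val := hlt
    have hk2pos : 0 < x k2 := lt_of_le_of_lt (abs_nonneg _) habs
    have hk2N : (k2 : Fin N).val + 1 < N := by simp [hk2]; omega
    have hmono : ∀ j : Fin N, j.val + 1 < N → x k2 ≤ x j := by
      intro j hj
      rcases lt_trichotomy j k2 with h|h|h
      · exact (hord j k2 h hk2N).le
      · rw [h]
      · exfalso
        have : (k2 : Fin N).val < j.val := h
        simp [hk2] at this; omega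
    by_cases h2 : p.2.val + 1 < N
    · have h1 : p.1.val + 1 < N := by omega
      have hxj : 0 < x p.2 := lt_of_lt_of_le hk2pos (hmono p.2 h2)
      have hij : x p.2 < x p.1 := hord _ _ hlt h2
      nlinarith
    · have hp2 : p.2 = k1 := by
        apply Fin.ext
        have := p.2.isLt
        simp [hk1]; omega
      have h1 : p.1.val + 1 < N := by
        have := p.2.isLt; omega
      have hxi : x k2 ≤ x p.1 := hmono p.1 h1
      have habs' : |x k1| < x p.1 := lt_of_lt_of_le habs hxi
      obtain ⟨hL, hR⟩ := abs_lt.mp habs'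
      rw [hp2]
      nlinarith
  -- base point
  set x0 : EuclideanSpace ℝ (Fin N) := WithLp.toLp 2 (fun i : Fin N => (N : ℝ) - i.1) with hx0
  have hx0S : x0 ∈ S := by
    constructor
    · intro i j hij hj
      have h : (i : ℕ) < j := hij
      show (N : ℝ) - j.1 < (N : ℝ) - i.1
      have : (i.1 : ℝ) < j.1 := by exact_mod_cast h
      linarith
    · show |(N : ℝ) - ((N-1 : ℕ) : ℝ)| < (N : ℝ) - ((N-2 : ℕ) : ℝ)
      rw [Nat.cast_sub (by omega), Nat.cast_sub (by omega)]
      push_cast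
      rw [show (N:ℝ) - ((N:ℝ) - 1) = 1 by ring, show (N:ℝ) - ((N:ℝ) - 2) = 2 by ring]
      norm_num
  set B : ℝ := W x0 with hB
  set M : ℕ := P.card with hM
  -- radius
  obtain ⟨T, hT⟩ := WD_aux_loglin (2 * M) B (by positivity)
  set R : ℝ := max 1 (max ‖x0‖ T) with hR
  have hR1 : (1:ℝ) ≤ R := le_max_left _ _
  have hRx0 : ‖x0‖ ≤ R := le_trans (le_max_left _ _) (le_max_right _ _)
  have hRT : T ≤ R := le_trans (le_max_right _ _) (le_max_right _ _)
  set c : ℝ := Real.log (R^2) with hc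
  have hc0 : 0 ≤ c := Real.log_nonneg (by nlinarith)
  -- minimal gap
  have hPne : P.Nonempty := by
    refine ⟨(k2, k1), Finset.mem_filter.mpr ⟨mem_univ _, ?_⟩⟩
    show (k2 : Fin N).val < k1.val
    simp [hk1, hk2]; omega
  set δ : ℝ := P.inf' hPne (fun p => x0 p.1 ^ 2 - x0 p.2 ^ 2) with hδ
  have hδpos : 0 < δ := by
    rw [hδ, Finset.lt_inf'_iff]
    exact fun p hp => hpos x0 hx0S p hp
  set δ' : ℝ := min δ (Real.exp ((B - 2*M*c - 1)/2)) with hδ'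
  have hδ'pos : 0 < δ' := lt_min hδpos (Real.exp_pos _)
  -- the compact set
  set C : Set (EuclideanSpace ℝ (Fin N)) :=
    {x | ‖x‖ ≤ R ∧ (∀ p ∈ P, δ' ≤ x p.1 ^ 2 - x p.2 ^ 2)
      ∧ (∀ i j : Fin N, i < j → j.val + 1 < N → x j ≤ x i) ∧ 0 ≤ x k2} with hC
  have hcont : ∀ i : Fin N, Continuous fun x : EuclideanSpace ℝ (Fin N) => x i :=
    fun i => (EuclideanSpace.proj i).continuous
  have hCclosed : IsClosed C := by
    have heq : C = {x : EuclideanSpace ℝ (Fin N) | ‖x‖ ≤ R}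
        ∩ ((⋂ p ∈ P, {x : EuclideanSpace ℝ (Fin N) | δ' ≤ x p.1 ^ 2 - x p.2 ^ 2})
        ∩ ((⋂ i : Fin N, ⋂ j : Fin N,
              {x : EuclideanSpace ℝ (Fin N) | i < j → j.val + 1 < N → x j ≤ x i})
        ∩ {x : EuclideanSpace ℝ (Fin N) | 0 ≤ x k2})) := by
      ext x
      simp only [hC, Set.mem_inter_iff, Set.mem_iInter, Set.mem_setOf_eq]
    rw [heq]
    refine (isClosed_le continuous_norm continuous_const).inter (IsClosed.inter ?_ (IsClosed.inter ?_ ?_))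
    · exact isClosed_biInter fun p _ => isClosed_le continuous_const
        (((hcont p.1).pow 2).sub ((hcont p.2).pow 2))
    · refine isClosed_iInter fun i => isClosed_iInter fun j => ?_
      by_cases h : i < j ∧ j.val + 1 < N
      · have : {x : EuclideanSpace ℝ (Fin N) | i < j → j.val + 1 < N → x j ≤ x i}
            = {x : EuclideanSpace ℝ (Fin N) | x j ≤ x i} := by
          ext x; simp [h.1, h.2]
        rw [this]
        exact isClosed_le (hcont j) (hcont i)
      · have : {x : EuclideanSpace ℝ (Fin N) | i < j → j.val + 1 < N → x j ≤ x i}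
            = Set.univ := by
          ext x
          simp only [Set.mem_setOf_eq, Set.mem_univ, iff_true]
          intro h1 h2; exact absurd ⟨h1, h2⟩ h
        rw [this]; exact isClosed_univ
    · exact isClosed_le continuous_const (hcont k2)
  have hCcompact : IsCompact C := by
    refine IsCompact.of_isClosed_subset (isCompact_closedBall (0 : EuclideanSpace ℝ (Fin N)) R)
      hCclosed ?_
    intro x hx
    rw [Metric.mem_closedBall, dist_zero_right]
    exact hx.1
  have hCS : C ⊆ S := by
    intro x hx
    obtain ⟨_, hgap, hord, hk2nn⟩ := hx
    constructor
    · intro i j hij hj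
      have hle : x j ≤ x i := hord i j hij hj
      have hg : δ' ≤ x i ^ 2 - x j ^ 2 :=
        hgap (i, j) (Finset.mem_filter.mpr ⟨mem_univ _, hij⟩)
      rcases eq_or_lt_of_le hle with h|h
      · exfalso; rw [h] at hg; simp at hg; linarith
      · exact h
    · have hg : δ' ≤ x k2 ^ 2 - x k1 ^ 2 := by
        refine hgap (k2, k1) (Finset.mem_filter.mpr ⟨mem_univ _, ?_⟩)
        show (k2 : Fin N).val < k1.val
        simp [hk1, hk2]; omega
      have hsq : x k1 ^ 2 < x k2 ^ 2 := by linarith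
      rcases abs_cases (x k1) with ⟨h1,_⟩|⟨h1,_⟩ <;> nlinarith
  have hx0C : x0 ∈ C := by
    refine ⟨hRx0, ?_, ?_, ?_⟩
    · intro p hp
      exact le_trans (min_le_left _ _) (Finset.inf'_le _ hp)
    · intro i j hij hj
      exact (hx0S.1 i j hij hj).le
    · exact le_of_lt (lt_of_le_of_lt (abs_nonneg _) hx0S.2)
  -- continuity of W on C
  have hWeq : W = fun x : EuclideanSpace ℝ (Fin N) =>
      2 * (∑ p ∈ P, Real.log (x p.1 ^ 2 - x p.2 ^ 2)) - ‖x‖ ^ 2 / 2 := funext hW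
  have hWcont : ContinuousOn W C := by
    rw [hWeq]
    apply ContinuousOn.sub
    · apply ContinuousOn.mul continuousOn_const
      apply continuousOn_finset_sum
      intro p hp
      apply ContinuousOn.log
      · exact (((hcont p.1).pow 2).sub ((hcont p.2).pow 2)).continuousOn
      · intro x hx
        exact ne_of_gt (lt_of_lt_of_le hδ'pos (hx.2.1 p hp))
    · exact ((continuous_norm.pow 2).div_const 2).continuousOn
  obtain ⟨y, hyC, hymax⟩ := hCcompact.exists_isMaxOn ⟨x0, hx0C⟩ hWcont
  refine ⟨y, hCS hyC, ?_⟩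
  intro x hx
  have hxS : x ∈ S := hx
  have hBy : B ≤ W y := hymax hx0C
  by_cases hxC : x ∈ C
  · exact hymax hxC
  · -- show W x < B
    have hxlt : W x < B := by
      by_cases hRx : ‖x‖ ≤ R
      · -- some gap must be small
        have hsmall : ∃ p ∈ P, x p.1 ^ 2 - x p.2 ^ 2 < δ' := by
          by_contra hcon
          push_neg at hcon
          exact hxC ⟨hRx, fun p hp => (hcon p hp), fun i j hij hj => (hxS.1 i j hij hj).le,
            le_of_lt (lt_of_le_of_lt (abs_nonneg _) hxS.2)⟩
        obtain ⟨p, hp, hps⟩ := hsmall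
        have hb1 : ∀ q ∈ P.erase p, Real.log (x q.1 ^ 2 - x q.2 ^ 2) ≤ c := by
          intro q hq
          have hq' : q ∈ P := Finset.mem_of_mem_erase hq
          refine Real.log_le_log (hpos x hxS q hq') ?_
          calc x q.1 ^ 2 - x q.2 ^ 2 ≤ ‖x‖^2 := hargle x q
            _ ≤ R^2 := by nlinarith [norm_nonneg x]
        have hsum1 : ∑ q ∈ P.erase p, Real.log (x q.1 ^ 2 - x q.2 ^ 2)
            ≤ (P.erase p).card • c := Finset.sum_le_card_nsmul _ _ _ hb1
        have hcard : ((P.erase p).card : ℝ) ≤ M := by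
          exact_mod_cast Finset.card_le_card (Finset.erase_subset _ _)
        have hsum1' : ∑ q ∈ P.erase p, Real.log (x q.1 ^ 2 - x q.2 ^ 2) ≤ M * c := by
          rw [nsmul_eq_mul] at hsum1
          nlinarith
        have hlogp : Real.log (x p.1 ^ 2 - x p.2 ^ 2) ≤ (B - 2*M*c - 1)/2 := by
          calc Real.log (x p.1 ^ 2 - x p.2 ^ 2) ≤ Real.log δ' :=
              Real.log_le_log (hpos x hxS p hp) hps.le
            _ ≤ Real.log (Real.exp ((B - 2*M*c - 1)/2)) :=
              Real.log_le_log hδ'pos (min_le_right _ _)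
            _ = (B - 2*M*c - 1)/2 := Real.log_exp _
        have hsplit : ∑ q ∈ P, Real.log (x q.1 ^ 2 - x q.2 ^ 2)
            = Real.log (x p.1 ^ 2 - x p.2 ^ 2)
              + ∑ q ∈ P.erase p, Real.log (x q.1 ^ 2 - x q.2 ^ 2) :=
          (Finset.add_sum_erase P _ hp).symm
        rw [hWeq]
        simp only
        rw [hsplit]
        have hnn : 0 ≤ ‖x‖^2/2 := by positivity
        linarith
      · -- norm is big
        push_neg at hRx
        have ht : ‖x‖^2 ≥ T := by
          have : R ≤ R^2 := by nlinarith
          nlinarith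
        have hb : ∀ q ∈ P, Real.log (x q.1 ^ 2 - x q.2 ^ 2) ≤ Real.log (‖x‖^2) := by
          intro q hq
          exact Real.log_le_log (hpos x hxS q hq) (hargle x q)
        have hsum : ∑ q ∈ P, Real.log (x q.1 ^ 2 - x q.2 ^ 2) ≤ M * Real.log (‖x‖^2) := by
          have := Finset.sum_le_card_nsmul P _ _ hb
          rwa [nsmul_eq_mul, ← hM] at this
        have := hT (‖x‖^2) ht
        rw [hWeq]
        simp only
        linarith
    linarith
end
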